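/- arXiv:2602.22797 — 7 statements merged into one kernel-verified Lean document; each statement's English description precedes it below -/
import Mathlib

section
/- For every real number δ with 0 < δ < 1 and every integer p ≥ 3, the set Z_p(δ) = {τ ∈ ℝ : H_p(τ,δ) = 0} is nonempty and bounded above and has a largest element h_p(δ), and this largest element satisfies g_{p/2}(δ) < h_p(δ) < g_{p−1}(δ), i.e. 2√δ·cos(2π/p) < h_p(δ) < 2√δ·cos(π/(p−1)). -/
/-!
Context: given real τ, δ with δ > 0, let λ₁ = (τ + √(τ²−4δ))/2 and
λ₂ = (τ − √(τ²−4δ))/2 (complex principal square root).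
H_p(τ,δ) = Σ_{j=1}^{p−1} Σ_{k=1}^{j} λ₁^{k−j} λ₂^{1−k}.
g_q(δ) = 2√δ cos(π/q).
-/

/-- λ₁ = (τ + √(τ²−4δ))/2, using the complex principal square root. -/
noncomputable def lam1 (τ δ : ℝ) : ℂ :=
  ((τ : ℂ) + ((τ : ℂ) ^ 2 - 4 * (δ : ℂ)) ^ ((1 : ℂ) / 2)) / 2

/-- λ₂ = (τ − √(τ²−4δ))/2, using the complex principal square root. -/
noncomputable def lam2 (τ δ : ℝ) : ℂ :=
  ((τ : ℂ) - ((τ : ℂ) ^ 2 - 4 * (δ : ℂ)) ^ ((1 : ℂ) / 2)) / 2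

/-- H_p(τ,δ) = Σ_{j=1}^{p−1} Σ_{k=1}^{j} λ₁^{k−j} λ₂^{1−k}
(indices shifted: j = j'+1, k = k'+1). -/
noncomputable def Hp (p : ℕ) (τ δ : ℝ) : ℂ :=
  ∑ j ∈ Finset.range (p - 1), ∑ k ∈ Finset.range (j + 1),
    lam1 τ δ ^ ((k : ℤ) - (j : ℤ)) * lam2 τ δ ^ (-(k : ℤ))


open Complex Finset

lemma cpow_half_ofReal (x : ℝ) :
    ((x:ℂ)) ^ ((1:ℂ)/2) = (Real.sqrt x : ℂ) + (Real.sqrt (-x) : ℂ) * Complex.I := by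
  rcases le_or_gt 0 x with hx | hx
  · have h1 : Real.sqrt (-x) = 0 := Real.sqrt_eq_zero'.2 (by linarith)
    have h2 : ((1:ℂ)/2) = ((1/2 : ℝ) : ℂ) := by norm_num
    rw [h1, h2, ← Complex.ofReal_cpow hx, ← Real.sqrt_eq_rpow]
    simp
  · have hx0 : (x:ℂ) ≠ 0 := by
      simpa using ne_of_lt hx
    rw [Complex.cpow_def_of_ne_zero hx0]
    have hlog : Complex.log (x:ℂ) = (Real.log (-x) : ℂ) + Real.pi * Complex.I := by
      apply Complex.ext
      · simp [Complex.log_re, Complex.norm_real, abs_of_neg hx, Real.log_neg_eq_log]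
      · simp [Complex.log_im, Complex.arg_ofReal_of_neg hx]
    have h1 : Real.sqrt x = 0 := Real.sqrt_eq_zero'.2 hx.le
    rw [hlog, h1]
    have : ((Real.log (-x) : ℂ) + Real.pi * Complex.I) * (1/2)
        = (Real.log (-x) / 2 : ℝ) + (Real.pi/2 : ℝ) * Complex.I := by
      push_cast; ring
    rw [this, Complex.exp_add]
    have e1 : Complex.exp ((Real.log (-x)/2 : ℝ)) = ((Real.sqrt (-x) : ℝ) : ℂ) := by
      rw [← Complex.ofReal_exp]
      norm_cast
      rw [Real.sqrt_eq_rpow, Real.rpow_def_of_pos (by linarith)]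
      ring_nf
    have e2 : Complex.exp ((Real.pi/2 : ℝ) * Complex.I) = Complex.I := by
      rw [Complex.exp_mul_I]
      rw [show ((Real.pi/2 : ℝ) : ℂ) = (Real.pi : ℂ)/2 by push_cast; ring,
        Complex.cos_pi_div_two, Complex.sin_pi_div_two]
      simp
    rw [e1, e2]
    simp

lemma lam1_eq (τ δ : ℝ) : lam1 τ δ =
    (((τ + Real.sqrt (τ^2 - 4*δ))/2 : ℝ) : ℂ) + ((Real.sqrt (4*δ - τ^2)/2 : ℝ) : ℂ) * Complex.I := by
  unfold lam1
  rw [show ((τ:ℂ)^2 - 4*(δ:ℂ)) = ((τ^2 - 4*δ : ℝ) : ℂ) by push_cast; ring,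
    cpow_half_ofReal, show -(τ^2 - 4*δ) = 4*δ - τ^2 by ring]
  push_cast; ring

lemma lam2_eq (τ δ : ℝ) : lam2 τ δ =
    (((τ - Real.sqrt (τ^2 - 4*δ))/2 : ℝ) : ℂ) - ((Real.sqrt (4*δ - τ^2)/2 : ℝ) : ℂ) * Complex.I := by
  unfold lam2
  rw [show ((τ:ℂ)^2 - 4*(δ:ℂ)) = ((τ^2 - 4*δ : ℝ) : ℂ) by push_cast; ring,
    cpow_half_ofReal, show -(τ^2 - 4*δ) = 4*δ - τ^2 by ring]
  push_cast; ring

lemma lam_mul (τ δ : ℝ) : lam1 τ δ * lam2 τ δ = (δ : ℂ) := by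
  rw [lam1_eq, lam2_eq]
  rcases le_or_gt (τ^2 - 4*δ) 0 with h | h
  · have h1 : Real.sqrt (τ^2 - 4*δ) = 0 := Real.sqrt_eq_zero'.2 h
    have h2 : Real.sqrt (4*δ - τ^2) ^ 2 = 4*δ - τ^2 := Real.sq_sqrt (by linarith)
    have h2' : ((Real.sqrt (4*δ - τ^2) : ℝ):ℂ)^2 = ((4*δ - τ^2 : ℝ):ℂ) := by
      exact_mod_cast congrArg (fun x : ℝ => (x : ℂ)) h2
    rw [h1]
    push_cast at h2' ⊢
    linear_combination (-(Complex.I^2)/4) * h2' + ((τ:ℂ)^2/4 - (δ:ℂ)) * Complex.I_sq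
  · have h1 : Real.sqrt (4*δ - τ^2) = 0 := Real.sqrt_eq_zero'.2 (by linarith)
    have h2 : Real.sqrt (τ^2 - 4*δ) ^ 2 = τ^2 - 4*δ := Real.sq_sqrt (by linarith)
    have h2' : ((Real.sqrt (τ^2 - 4*δ) : ℝ):ℂ)^2 = ((τ^2 - 4*δ : ℝ):ℂ) := by
      exact_mod_cast congrArg (fun x : ℝ => (x : ℂ)) h2
    rw [h1]
    push_cast at h2' ⊢
    linear_combination (-(1:ℂ)/4) * h2'

lemma lam1_ne (τ δ : ℝ) (hδ : δ ≠ 0) : lam1 τ δ ≠ 0 := by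
  intro h
  have := lam_mul τ δ
  rw [h, zero_mul] at this
  exact hδ (by exact_mod_cast this.symm)

lemma lam2_ne (τ δ : ℝ) (hδ : δ ≠ 0) : lam2 τ δ ≠ 0 := by
  intro h
  have := lam_mul τ δ
  rw [h, mul_zero] at this
  exact hδ (by exact_mod_cast this.symm)

lemma Hp_eq (p : ℕ) (τ δ : ℝ) (hδ : δ ≠ 0) :
    Hp p τ δ = ∑ j ∈ range (p-1), (((δ:ℂ)) ^ j)⁻¹ *
      ∑ k ∈ range (j+1), lam1 τ δ ^ k * lam2 τ δ ^ (j - k) := by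
  have h1 := lam1_ne τ δ hδ
  have h2 := lam2_ne τ δ hδ
  unfold Hp
  refine sum_congr rfl fun j hj => ?_
  rw [mul_sum]
  refine sum_congr rfl fun k hk => ?_
  have hk' : k ≤ j := by simpa [Nat.lt_succ_iff] using mem_range.1 hk
  have hcast : ((j - k : ℕ) : ℤ) = (j:ℤ) - (k:ℤ) := by
    exact_mod_cast Int.ofNat_sub hk'
  rw [← lam_mul τ δ]
  rw [← zpow_natCast (lam1 τ δ) k, ← zpow_natCast (lam2 τ δ) (j-k),
    ← zpow_natCast (lam1 τ δ * lam2 τ δ) j, hcast, ← zpow_neg, mul_zpow,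
    zpow_sub₀ h1, zpow_sub₀ h2]
  field_simp
  rw [zpow_neg, zpow_neg, zpow_neg, inv_mul_cancel₀ (zpow_ne_zero _ h2),
    mul_inv_cancel₀ (zpow_ne_zero _ h1), one_mul, inv_mul_cancel₀ (zpow_ne_zero _ h2)]

lemma lam_cosA (δ θ : ℝ) (hδ : 0 < δ) (hθ1 : 0 < θ) (hθ2 : θ < Real.pi) :
    lam1 (2 * Real.sqrt δ * Real.cos θ) δ = (Real.sqrt δ : ℂ) * Complex.exp (θ * Complex.I) ∧
    lam2 (2 * Real.sqrt δ * Real.cos θ) δ = (Real.sqrt δ : ℂ) * Complex.exp (-(θ * Complex.I)) := by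
  have hr : 0 < Real.sqrt δ := Real.sqrt_pos.2 hδ
  have hr2 : Real.sqrt δ ^ 2 = δ := Real.sq_sqrt hδ.le
  have hs : 0 < Real.sin θ := Real.sin_pos_of_pos_of_lt_pi hθ1 hθ2
  have key : (2 * Real.sqrt δ * Real.cos θ)^2 - 4*δ = -((2 * Real.sqrt δ * Real.sin θ)^2) := by
    have := Real.sin_sq_add_cos_sq θ
    nlinarith
  have h1 : Real.sqrt ((2 * Real.sqrt δ * Real.cos θ)^2 - 4*δ) = 0 :=
    Real.sqrt_eq_zero'.2 (by nlinarith)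
  have h2 : Real.sqrt (4*δ - (2 * Real.sqrt δ * Real.cos θ)^2) = 2 * Real.sqrt δ * Real.sin θ := by
    rw [show 4*δ - (2 * Real.sqrt δ * Real.cos θ)^2 = (2 * Real.sqrt δ * Real.sin θ)^2 by linarith]
    exact Real.sqrt_sq (by positivity)
  constructor
  · rw [lam1_eq, h1, h2, Complex.exp_mul_I]
    push_cast [Complex.ofReal_cos, Complex.ofReal_sin]
    ring
  · rw [lam2_eq, h1, h2, ← neg_mul, Complex.exp_mul_I, Complex.cos_neg, Complex.sin_neg]
    push_cast [Complex.ofReal_cos, Complex.ofReal_sin]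
    ring

lemma HpA (p : ℕ) (δ θ : ℝ) (hδ : 0 < δ) (hθ1 : 0 < θ) (hθ2 : θ < Real.pi) :
    Hp p (2 * Real.sqrt δ * Real.cos θ) δ =
      ((∑ j ∈ range (p-1), (Real.sqrt δ ^ j)⁻¹ *
        Real.sin (((j:ℝ)+1)*θ) / Real.sin θ : ℝ) : ℂ) := by
  have hr : 0 < Real.sqrt δ := Real.sqrt_pos.2 hδ
  have hr2 : Real.sqrt δ ^ 2 = δ := Real.sq_sqrt hδ.le
  have hs : 0 < Real.sin θ := Real.sin_pos_of_pos_of_lt_pi hθ1 hθ2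
  obtain ⟨ha, hb⟩ := lam_cosA δ θ hδ hθ1 hθ2
  set a := lam1 (2 * Real.sqrt δ * Real.cos θ) δ with hadef
  set b := lam2 (2 * Real.sqrt δ * Real.cos θ) δ with hbdef
  rw [Hp_eq _ _ _ (ne_of_gt hδ)]
  rw [Complex.ofReal_sum]
  refine sum_congr rfl fun j hj => ?_
  -- inner geometric sum
  have hab : a - b = (2 * Real.sin θ * Real.sqrt δ : ℝ) * Complex.I := by
    rw [ha, hb, Complex.exp_mul_I, ← neg_mul, Complex.exp_mul_I, Complex.cos_neg, Complex.sin_neg]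
    push_cast [Complex.ofReal_cos, Complex.ofReal_sin]
    ring
  have hsC : Complex.sin (θ:ℂ) ≠ 0 := by
    rw [← Complex.ofReal_sin]
    exact_mod_cast hs.ne'
  have hrC : ((Real.sqrt δ : ℝ):ℂ) ≠ 0 := by exact_mod_cast hr.ne'
  have habne : a - b ≠ 0 := by
    rw [hab]
    apply mul_ne_zero _ Complex.I_ne_zero
    exact_mod_cast (by positivity : (0:ℝ) < 2 * Real.sin θ * Real.sqrt δ).ne'
  have hpow : ∀ n : ℕ, a ^ n - b ^ n = ((Real.sqrt δ ^ n * (2 * Real.sin ((n:ℝ)*θ)) : ℝ)) * Complex.I := by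
    intro n
    rw [ha, hb, mul_pow, mul_pow, ← Complex.exp_nat_mul, ← Complex.exp_nat_mul]
    rw [show (n:ℂ) * -(↑θ * Complex.I) = -((n:ℂ)*θ * Complex.I) by ring,
      show (n:ℂ) * (↑θ * Complex.I) = (n:ℂ)*θ * Complex.I by ring]
    rw [Complex.exp_mul_I, ← neg_mul, Complex.exp_mul_I, Complex.cos_neg, Complex.sin_neg]
    push_cast [Complex.ofReal_cos, Complex.ofReal_sin]
    ring
  have hinner : ∑ k ∈ range (j+1), a ^ k * b ^ (j - k)
      = ((Real.sqrt δ ^ j * Real.sin (((j:ℝ)+1)*θ) / Real.sin θ : ℝ) : ℂ) := by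
    have hg := geom_sum₂_mul a b (j+1)
    have : ∑ k ∈ range (j+1), a ^ k * b ^ (j - k) = ∑ k ∈ range (j+1), a ^ k * b ^ (j + 1 - 1 - k) := by
      refine sum_congr rfl fun k hk => by norm_num
    rw [this]
    apply mul_right_cancel₀ habne
    rw [hg, hab, hpow (j+1)]
    push_cast
    field_simp
    ring
  rw [hinner]
  rw [show ((δ:ℂ)^j)⁻¹ = (((δ^j)⁻¹ : ℝ) : ℂ) by push_cast; ring, ← Complex.ofReal_mul]
  norm_cast
  field_simp
  rw [show δ ^ j = Real.sqrt δ ^ (2*j) by rw [pow_mul, hr2]]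
  ring

lemma lamB (τ δ : ℝ) (h : 4*δ ≤ τ^2) :
    lam1 τ δ = (((τ + Real.sqrt (τ^2 - 4*δ))/2 : ℝ) : ℂ) ∧
    lam2 τ δ = (((τ - Real.sqrt (τ^2 - 4*δ))/2 : ℝ) : ℂ) := by
  have h4 : Real.sqrt (4*δ - τ^2) = 0 := Real.sqrt_eq_zero'.2 (by linarith)
  rw [lam1_eq, lam2_eq, h4]
  norm_num

lemma HpB (p : ℕ) (τ δ : ℝ) (hδ : 0 < δ) (h : 4*δ ≤ τ^2) :
    Hp p τ δ = ((∑ j ∈ range (p-1), ((δ:ℝ)^j)⁻¹ * ∑ k ∈ range (j+1),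
        ((τ + Real.sqrt (τ^2-4*δ))/2)^k * ((τ - Real.sqrt (τ^2-4*δ))/2)^(j-k) : ℝ) : ℂ) := by
  obtain ⟨h1, h2⟩ := lamB τ δ h
  rw [Hp_eq _ _ _ (ne_of_gt hδ), Complex.ofReal_sum]
  refine sum_congr rfl fun j hj => ?_
  rw [h1, h2]
  push_cast
  ring

lemma Hp_cont (p : ℕ) (δ : ℝ) (hδ : 0 < δ) : Continuous fun τ => Hp p τ δ := by
  have c1 : Continuous fun τ => lam1 τ δ := by
    have e1 : (fun τ => lam1 τ δ) = fun τ =>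
        (((τ + Real.sqrt (τ^2 - 4*δ))/2 : ℝ) : ℂ) + ((Real.sqrt (4*δ - τ^2)/2 : ℝ) : ℂ) * Complex.I :=
      funext fun τ => lam1_eq τ δ
    rw [e1]; fun_prop
  have c2 : Continuous fun τ => lam2 τ δ := by
    have e2 : (fun τ => lam2 τ δ) = fun τ =>
        (((τ - Real.sqrt (τ^2 - 4*δ))/2 : ℝ) : ℂ) - ((Real.sqrt (4*δ - τ^2)/2 : ℝ) : ℂ) * Complex.I :=
      funext fun τ => lam2_eq τ δ
    rw [e2]; fun_prop
  unfold Hp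
  refine continuous_finset_sum _ fun j _ => continuous_finset_sum _ fun k _ => ?_
  exact (c1.zpow₀ _ fun τ => Or.inl (lam1_ne τ δ (ne_of_gt hδ))).mul
    (c2.zpow₀ _ fun τ => Or.inl (lam2_ne τ δ (ne_of_gt hδ)))

lemma sum_neg_at_theta (p : ℕ) (hp : 3 ≤ p) (r : ℝ) (hr0 : 0 < r) (hr1 : r < 1) :
    ∑ j ∈ range (p-1), (r^j)⁻¹ * Real.sin (((j:ℝ)+1)*(2*Real.pi/p)) < 0 := by
  set θ := 2*Real.pi/p with hθdef
  have hpR : (0:ℝ) < p := by positivity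
  have hpi := Real.pi_pos
  set f : ℕ → ℝ := fun j => (r^j)⁻¹ * Real.sin (((j:ℝ)+1)*θ) with hf
  have refl := Finset.sum_range_reflect f (p-1)
  have key : ∀ j ∈ range (p-1), f (p-1-1-j) = -((r^(p-2-j))⁻¹ * Real.sin (((j:ℝ)+1)*θ)) := by
    intro j hj
    have hj' : j ≤ p - 2 := by have := mem_range.1 hj; omega
    have hpj : p-1-1-j = p-2-j := by omega
    have hc : ((p-2-j : ℕ) : ℝ) = (p:ℝ) - 2 - j := by
      have h1 : (p:ℕ) - 2 - j + j + 2 = p := by omega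
      have := congrArg (fun n : ℕ => (n:ℝ)) h1
      push_cast at this
      linarith
    rw [hf]
    simp only [hpj]
    rw [hc, show ((p:ℝ)-2-(j:ℝ)+1)*θ = 2*Real.pi - ((j:ℝ)+1)*θ by
        rw [hθdef]; field_simp; ring]
    rw [show 2*Real.pi - ((j:ℝ)+1)*θ = -((((j:ℝ)+1)*θ) - 2*Real.pi) by ring,
      Real.sin_neg, Real.sin_sub_two_pi]
    ring
  have h2G : (∑ j ∈ range (p-1), f j) + (∑ j ∈ range (p-1), f j)
      = ∑ j ∈ range (p-1), (((r^j)⁻¹ - (r^(p-2-j))⁻¹) * Real.sin (((j:ℝ)+1)*θ)) := by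
    nth_rewrite 1 [← refl]
    rw [← Finset.sum_add_distrib]
    refine sum_congr rfl fun j hj => ?_
    rw [key j hj, hf]
    ring
  have hterm : ∀ j ∈ range (p-1), ((r^j)⁻¹ - (r^(p-2-j))⁻¹) * Real.sin (((j:ℝ)+1)*θ) ≤ 0 := by
    intro j hj
    have hjlt : j < p - 1 := mem_range.1 hj
    have hθpos : 0 < θ := by rw [hθdef]; positivity
    have hx0 : 0 < ((j:ℝ)+1)*θ := by positivity
    rcases lt_trichotomy (2*(j+1)) p with h | h | h
    · -- sin > 0, factor ≤ 0
      have hsin : 0 < Real.sin (((j:ℝ)+1)*θ) := by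
        apply Real.sin_pos_of_pos_of_lt_pi hx0
        rw [hθdef]
        have h' : (2:ℝ)*((j:ℝ)+1) < p := by exact_mod_cast h
        rw [show ((j:ℝ)+1)*(2*Real.pi/p) = ((j:ℝ)+1)*(2*Real.pi)/p by ring, div_lt_iff₀ hpR]
        nlinarith
      have hjle : j ≤ p-2-j := by omega
      have hpow : r^(p-2-j) ≤ r^j := pow_le_pow_of_le_one hr0.le hr1.le hjle
      have hfac : (r^j)⁻¹ - (r^(p-2-j))⁻¹ ≤ 0 := by
        have : (r^j)⁻¹ ≤ (r^(p-2-j))⁻¹ := by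
          apply inv_anti₀ (by positivity) hpow
        linarith
      exact mul_nonpos_of_nonpos_of_nonneg hfac hsin.le
    · have : ((j:ℝ)+1)*θ = Real.pi := by
        rw [hθdef]
        have : (2:ℝ)*((j:ℝ)+1) = p := by exact_mod_cast h
        field_simp
        nlinarith
      rw [this, Real.sin_pi, mul_zero]
    · have hjp : (j:ℝ)+1 < p := by
        have : j + 1 < p := by omega
        exact_mod_cast this
      have hx2 : ((j:ℝ)+1)*θ < 2*Real.pi := by
        rw [hθdef]
        rw [show ((j:ℝ)+1)*(2*Real.pi/p) = ((j:ℝ)+1)*(2*Real.pi)/p by ring, div_lt_iff₀ hpR]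
        nlinarith
      have hx1 : Real.pi < ((j:ℝ)+1)*θ := by
        rw [hθdef]
        have h' : (p:ℝ) < 2*((j:ℝ)+1) := by exact_mod_cast h
        rw [show ((j:ℝ)+1)*(2*Real.pi/p) = ((j:ℝ)+1)*(2*Real.pi)/p by ring, lt_div_iff₀ hpR]
        nlinarith
      have hsin : Real.sin (((j:ℝ)+1)*θ) < 0 := by
        have h1 : 0 < Real.sin (((j:ℝ)+1)*θ - Real.pi) :=
          Real.sin_pos_of_pos_of_lt_pi (by linarith) (by linarith)
        rw [Real.sin_sub_pi] at h1
        linarith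
      have hjle : p-2-j ≤ j := by omega
      have hpow : r^j ≤ r^(p-2-j) := pow_le_pow_of_le_one hr0.le hr1.le hjle
      have hfac : 0 ≤ (r^j)⁻¹ - (r^(p-2-j))⁻¹ := by
        have : (r^(p-2-j))⁻¹ ≤ (r^j)⁻¹ := by
          apply inv_anti₀ (by positivity) hpow
        linarith
      exact mul_nonpos_of_nonneg_of_nonpos hfac hsin.le
  have hstrict : ((r^0)⁻¹ - (r^(p-2-0))⁻¹) * Real.sin (((0:ℕ):ℝ)+1)*θ < 0 → True := fun _ => trivial
  have h0mem : 0 ∈ range (p-1) := mem_range.2 (by omega)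
  have hterm0 : ((r^0)⁻¹ - (r^(p-2-0))⁻¹) * Real.sin ((((0:ℕ):ℝ)+1)*θ) < 0 := by
    have hθpos : 0 < θ := by rw [hθdef]; positivity
    have hθpi : θ < Real.pi := by
      rw [hθdef, div_lt_iff₀ hpR]
      have : (3:ℝ) ≤ p := by exact_mod_cast hp
      nlinarith
    have hsin : 0 < Real.sin (((0:ℕ):ℝ)+1 : ℝ) * θ → True := fun _ => trivial
    have hsin' : 0 < Real.sin ((((0:ℕ):ℝ)+1)*θ) := by
      rw [show (((0:ℕ):ℝ)+1)*θ = θ by norm_num]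
      exact Real.sin_pos_of_pos_of_lt_pi hθpos hθpi
    have hplt : r^(p-2) < 1 := pow_lt_one₀ hr0.le hr1 (by omega)
    have hfac : (r^0)⁻¹ - (r^(p-2-0))⁻¹ < 0 := by
      simp only [pow_zero, inv_one, Nat.sub_zero]
      have : 1 < (r^(p-2))⁻¹ := (one_lt_inv₀ (by positivity)).2 hplt
      linarith
    exact mul_neg_of_neg_of_pos hfac hsin'
  have hsum : ∑ j ∈ range (p-1), (((r^j)⁻¹ - (r^(p-2-j))⁻¹) * Real.sin (((j:ℝ)+1)*θ)) < 0 := by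
    calc ∑ j ∈ range (p-1), (((r^j)⁻¹ - (r^(p-2-j))⁻¹) * Real.sin (((j:ℝ)+1)*θ))
        < ∑ j ∈ range (p-1), (0:ℝ) := by
          apply Finset.sum_lt_sum hterm ⟨0, h0mem, hterm0⟩
      _ = 0 := by simp
  linarith

lemma sum_pos_small_theta (p : ℕ) (hp : 3 ≤ p) (r : ℝ) (hr0 : 0 < r) (θ : ℝ)
    (hθ1 : 0 < θ) (hθ2 : θ ≤ Real.pi/((p:ℝ)-1)) :
    0 < ∑ j ∈ range (p-1), (r^j)⁻¹ * Real.sin (((j:ℝ)+1)*θ) / Real.sin θ := by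
  have hp1 : (2:ℝ) ≤ (p:ℝ) - 1 := by
    have : (3:ℝ) ≤ p := by exact_mod_cast hp
    linarith
  have hpi := Real.pi_pos
  have hθpi : θ < Real.pi := by
    have : Real.pi/((p:ℝ)-1) ≤ Real.pi/2 := by
      apply div_le_div_of_nonneg_left hpi.le (by norm_num) hp1
    linarith
  have hsinθ : 0 < Real.sin θ := Real.sin_pos_of_pos_of_lt_pi hθ1 hθpi
  apply Finset.sum_pos'
  · intro j hj
    have hjlt : j < p - 1 := mem_range.1 hj
    have hjle : (j:ℝ) + 1 ≤ (p:ℝ) - 1 := by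
      have : j + 2 ≤ p := by omega
      have := (by exact_mod_cast this : (j:ℝ) + 2 ≤ (p:ℝ))
      linarith
    have hsin : 0 ≤ Real.sin (((j:ℝ)+1)*θ) := by
      apply Real.sin_nonneg_of_nonneg_of_le_pi (by positivity)
      calc ((j:ℝ)+1)*θ ≤ ((p:ℝ)-1)*θ := by nlinarith
        _ ≤ ((p:ℝ)-1)*(Real.pi/((p:ℝ)-1)) := by nlinarith
        _ = Real.pi := by field_simp
    positivity
  · refine ⟨0, mem_range.2 (by omega), ?_⟩
    simp only [Nat.cast_zero, pow_zero, inv_one, zero_add, one_mul]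
    rw [div_self hsinθ.ne']
    norm_num

lemma arccos_le_arccos' {x y : ℝ} (h : x ≤ y) : Real.arccos y ≤ Real.arccos x := by
  unfold Real.arccos
  have := Real.monotone_arcsin h
  linarith

lemma Hp_real (p : ℕ) (δ : ℝ) (hδ : 0 < δ) (τ : ℝ) : Hp p τ δ = ((Hp p τ δ).re : ℂ) := by
  rcases le_or_gt (4*δ) (τ^2) with h | h
  · rw [HpB p τ δ hδ h, Complex.ofReal_re]
  · have hr : 0 < Real.sqrt δ := Real.sqrt_pos.2 hδ
    have hr2 : Real.sqrt δ ^ 2 = δ := Real.sq_sqrt hδ.le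
    have hτ1 : τ < 2*Real.sqrt δ := by nlinarith
    have hτ2 : -(2*Real.sqrt δ) < τ := by nlinarith
    have hx1 : τ/(2*Real.sqrt δ) < 1 := (div_lt_one (by positivity)).2 hτ1
    have hx2 : -1 < τ/(2*Real.sqrt δ) := by
      rw [lt_div_iff₀ (by positivity)]; linarith
    set θ := Real.arccos (τ/(2*Real.sqrt δ)) with hθdef
    have hθ1 : 0 < θ := Real.arccos_pos.2 hx1
    have hθ2 : θ < Real.pi := lt_of_le_of_ne (Real.arccos_le_pi _)
      (fun he => absurd (Real.arccos_eq_pi.1 he) (by push_neg; linarith))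
    have hcos : 2*Real.sqrt δ*Real.cos θ = τ := by
      rw [hθdef, Real.cos_arccos hx2.le hx1.le]; field_simp
    rw [← hcos, HpA p δ θ hδ hθ1 hθ2, Complex.ofReal_re]

lemma Hp_pos_ge (p : ℕ) (hp : 3 ≤ p) (δ : ℝ) (hδ0 : 0 < δ) (τ : ℝ)
    (hτ : 2*Real.sqrt δ*Real.cos (Real.pi/((p:ℝ)-1)) ≤ τ) : 0 < (Hp p τ δ).re := by
  have hr : 0 < Real.sqrt δ := Real.sqrt_pos.2 hδ0
  have hr2 : Real.sqrt δ ^ 2 = δ := Real.sq_sqrt hδ0.le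
  have hp1 : (2:ℝ) ≤ (p:ℝ) - 1 := by
    have : (3:ℝ) ≤ p := by exact_mod_cast hp
    linarith
  have hpi := Real.pi_pos
  rcases le_or_gt (2*Real.sqrt δ) τ with h | h
  · have hτpos : 0 < τ := lt_of_lt_of_le (by positivity) h
    have h4 : 4*δ ≤ τ^2 := by nlinarith
    rw [HpB p τ δ hδ0 h4, Complex.ofReal_re]
    have hs : Real.sqrt (τ^2-4*δ) < τ := (Real.sqrt_lt' hτpos).2 (by nlinarith)
    have hsn : 0 ≤ Real.sqrt (τ^2-4*δ) := Real.sqrt_nonneg _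
    apply Finset.sum_pos _ (Finset.nonempty_range_iff.2 (by omega))
    intro j hj
    apply mul_pos (by positivity)
    apply Finset.sum_pos _ (Finset.nonempty_range_iff.2 (by omega))
    intro k hk
    have hu : 0 < (τ + Real.sqrt (τ^2-4*δ))/2 := by linarith
    have hv : 0 < (τ - Real.sqrt (τ^2-4*δ))/2 := by linarith
    positivity
  · have hcosle : Real.cos (Real.pi/((p:ℝ)-1)) ≤ τ/(2*Real.sqrt δ) := by
      rw [le_div_iff₀ (by positivity)]
      linarith [hτ]
    have hx1 : τ/(2*Real.sqrt δ) < 1 := (div_lt_one (by positivity)).2 h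
    have hx2 : -1 ≤ τ/(2*Real.sqrt δ) := le_trans (Real.neg_one_le_cos _) hcosle
    set θ := Real.arccos (τ/(2*Real.sqrt δ)) with hθdef
    have hθ1 : 0 < θ := Real.arccos_pos.2 hx1
    have hθle : θ ≤ Real.pi/((p:ℝ)-1) := by
      have h1 := arccos_le_arccos' hcosle
      rwa [Real.arccos_cos (by positivity) (by
        calc Real.pi/((p:ℝ)-1) ≤ Real.pi/2 := by
              apply div_le_div_of_nonneg_left hpi.le (by norm_num) hp1
          _ ≤ Real.pi := by linarith)] at h1
    have hθ2 : θ < Real.pi := by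
      calc θ ≤ Real.pi/((p:ℝ)-1) := hθle
        _ ≤ Real.pi/2 := by apply div_le_div_of_nonneg_left hpi.le (by norm_num) hp1
        _ < Real.pi := by linarith
    have hcos : 2*Real.sqrt δ*Real.cos θ = τ := by
      rw [hθdef, Real.cos_arccos hx2 hx1.le]; field_simp
    rw [← hcos, HpA p δ θ hδ0 hθ1 hθ2, Complex.ofReal_re]
    exact sum_pos_small_theta p hp (Real.sqrt δ) hr θ hθ1 hθle

lemma Hp_neg_at (p : ℕ) (hp : 3 ≤ p) (δ : ℝ) (hδ0 : 0 < δ) (hδ1 : δ < 1) :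
    (Hp p (2*Real.sqrt δ*Real.cos (2*Real.pi/p)) δ).re < 0 := by
  have hr : 0 < Real.sqrt δ := Real.sqrt_pos.2 hδ0
  have hr1 : Real.sqrt δ < 1 := by
    rw [Real.sqrt_lt' one_pos]; norm_num; exact hδ1
  have hpR : (0:ℝ) < p := by positivity
  have hp3 : (3:ℝ) ≤ p := by exact_mod_cast hp
  have hpi := Real.pi_pos
  have hθ1 : 0 < 2*Real.pi/p := by positivity
  have hθ2 : 2*Real.pi/p < Real.pi := by
    rw [div_lt_iff₀ hpR]; nlinarith
  rw [HpA p δ _ hδ0 hθ1 hθ2, Complex.ofReal_re]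
  rw [← Finset.sum_div]
  exact div_neg_of_neg_of_pos (sum_neg_at_theta p hp _ hr hr1)
    (Real.sin_pos_of_pos_of_lt_pi hθ1 hθ2)

/-- For 0 < δ < 1 and p ≥ 3, the zero set of τ ↦ H_p(τ,δ) is nonempty and
bounded above, it has a largest element h_p(δ), and
2√δ cos(2π/p) < h_p(δ) < 2√δ cos(π/(p−1)). -/
theorem zero_set_of_Hp_has_greatest_element_with_bounds
    (δ : ℝ) (hδ0 : 0 < δ) (hδ1 : δ < 1) (p : ℕ) (hp : 3 ≤ p) :
    {τ : ℝ | Hp p τ δ = 0}.Nonempty ∧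
    BddAbove {τ : ℝ | Hp p τ δ = 0} ∧
    ∃ h : ℝ, IsGreatest {τ : ℝ | Hp p τ δ = 0} h ∧
      2 * Real.sqrt δ * Real.cos (2 * Real.pi / p) < h ∧
      h < 2 * Real.sqrt δ * Real.cos (Real.pi / ((p : ℝ) - 1)) := by
  have hr : 0 < Real.sqrt δ := Real.sqrt_pos.2 hδ0
  have hpi := Real.pi_pos
  have hpR : (0:ℝ) < p := by positivity
  have hp3 : (3:ℝ) ≤ p := by exact_mod_cast hp
  set f : ℝ → ℝ := fun τ => (Hp p τ δ).re with hfdef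
  have hf : Continuous f := Complex.continuous_re.comp (Hp_cont p δ hδ0)
  have hiff : ∀ τ : ℝ, Hp p τ δ = 0 ↔ f τ = 0 := by
    intro τ
    constructor
    · intro h; rw [hfdef]; simp [h]
    · intro h; rw [Hp_real p δ hδ0 τ]
      rw [hfdef] at h; simp [h]
  set a₀ := 2 * Real.sqrt δ * Real.cos (2 * Real.pi / p) with ha₀
  set b₀ := 2 * Real.sqrt δ * Real.cos (Real.pi / ((p:ℝ) - 1)) with hb₀
  have hfa : f a₀ < 0 := Hp_neg_at p hp δ hδ0 hδ1
  have hfb : 0 < f b₀ := Hp_pos_ge p hp δ hδ0 b₀ le_rfl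
  have hab : a₀ < b₀ := by
    have h1 : Real.pi/((p:ℝ)-1) < 2*Real.pi/p := by
      rw [div_lt_div_iff₀ (by linarith) hpR]
      nlinarith
    have h2 : Real.cos (2*Real.pi/p) < Real.cos (Real.pi/((p:ℝ)-1)) :=
      Real.cos_lt_cos_of_nonneg_of_le_pi (by apply div_nonneg hpi.le; linarith)
        (by rw [div_le_iff₀ hpR]; nlinarith) h1
    rw [ha₀, hb₀]
    nlinarith
  obtain ⟨c, hcIcc, hfc⟩ := (intermediate_value_Icc hab.le hf.continuousOn)
    (Set.mem_Icc.2 ⟨hfa.le, hfb.le⟩)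
  have hcS : c ∈ {τ : ℝ | Hp p τ δ = 0} := (hiff c).2 hfc
  have hca : a₀ < c := lt_of_le_of_ne hcIcc.1 (fun he => by rw [← he] at hfc; linarith)
  have hbound : ∀ τ ∈ {τ : ℝ | Hp p τ δ = 0}, τ < b₀ := by
    intro τ hτ
    by_contra hge
    push_neg at hge
    have h2 : 0 < f τ := Hp_pos_ge p hp δ hδ0 τ hge
    have h0 : f τ = 0 := (hiff τ).1 hτ
    linarith
  have hbdd : BddAbove {τ : ℝ | Hp p τ δ = 0} := ⟨b₀, fun x hx => (hbound x hx).le⟩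
  have hclosed : IsClosed {τ : ℝ | Hp p τ δ = 0} := by
    have : {τ : ℝ | Hp p τ δ = 0} = f ⁻¹' {0} := by
      ext τ; simp [hiff τ, Set.mem_preimage]
    rw [this]
    exact isClosed_singleton.preimage hf
  have hne : {τ : ℝ | Hp p τ δ = 0}.Nonempty := ⟨c, hcS⟩
  have hmem := hclosed.csSup_mem hne hbdd
  refine ⟨hne, hbdd, sSup {τ : ℝ | Hp p τ δ = 0}, ⟨hmem, fun x hx => le_csSup hbdd hx⟩, ?_, ?_⟩
  · exact lt_of_lt_of_le hca (le_csSup hbdd hcS)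
  · exact hbound _ hmem
end

section
/- For every real τ, every real δ > 0, and every integer p ≥ 1: δ^{p−2} H_p(τ,δ) = S_{p−1} T_p − S_p T_{p−1}. -/
/-- S_j = Σ_{k=1}^{j} λ₁^{j−k} λ₂^{k−1} (index shifted: k = k'+1). -/
noncomputable def Sseq (τ δ : ℝ) (j : ℕ) : ℂ :=
  ∑ k ∈ Finset.range j, lam1 τ δ ^ (j - 1 - k) * lam2 τ δ ^ k

/-- T_j = Σ_{i=1}^{j−1} S_i. -/
noncomputable def Tseq (τ δ : ℝ) (j : ℕ) : ℂ :=
  ∑ i ∈ Finset.Icc 1 (j - 1), Sseq τ δ i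

section aux

/-- Generic version of `Sseq` for two complex numbers. -/
noncomputable def Sgen (a b : ℂ) (j : ℕ) : ℂ :=
  ∑ k ∈ Finset.range j, a ^ (j - 1 - k) * b ^ k

variable (a b : ℂ)

lemma Sgen_zero : Sgen a b 0 = 0 := by simp [Sgen]

lemma Sgen_one : Sgen a b 1 = 1 := by simp [Sgen]

lemma Sgen_succ' (n : ℕ) : Sgen a b (n + 1) = a * Sgen a b n + b ^ n := by
  rw [Sgen, Finset.sum_range_succ]
  simp only [Nat.add_sub_cancel, Nat.sub_self, pow_zero, one_mul]
  rw [Sgen, Finset.mul_sum]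
  congr 1
  refine Finset.sum_congr rfl fun k hk => ?_
  have hk' := Finset.mem_range.mp hk
  have h : n - k = (n - 1 - k) + 1 := by omega
  rw [h]; ring

lemma Sgen_rec (n : ℕ) :
    Sgen a b (n + 2) = (a + b) * Sgen a b (n + 1) - a * b * Sgen a b n := by
  have h1 := Sgen_succ' a b (n + 1)
  have h2 := Sgen_succ' a b n
  linear_combination h1 - b * h2

lemma Sgen_key (d e : ℕ) :
    Sgen a b (d + e + 1) * Sgen a b (d + 1) - Sgen a b (d + e + 2) * Sgen a b d
      = (a * b) ^ d * Sgen a b (e + 1) := by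
  induction d with
  | zero => simp [Sgen_zero, Sgen_one]
  | succ d ih =>
    have e1 : d + 1 + e + 1 = d + e + 2 := by omega
    have e2 : d + 1 + e + 2 = (d + e + 1) + 2 := by omega
    rw [e1, e2]
    have h1 := Sgen_rec a b d
    have h2 := Sgen_rec a b (d + e + 1)
    have e4 : d + e + 1 + 1 = d + e + 2 := by omega
    rw [e4] at h2
    calc Sgen a b (d + e + 2) * Sgen a b (d + 1 + 1)
        - Sgen a b (d + e + 1 + 2) * Sgen a b (d + 1)
        = (a * b) * (Sgen a b (d + e + 1) * Sgen a b (d + 1)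
            - Sgen a b (d + e + 2) * Sgen a b d) := by
          rw [show d + 1 + 1 = d + 2 from rfl]
          linear_combination Sgen a b (d + e + 2) * h1 - Sgen a b (d + 1) * h2
      _ = (a * b) ^ (d + 1) * Sgen a b (e + 1) := by rw [ih]; ring

lemma zpow_mul_zpow_eq (ha : a ≠ 0) (hb : b ≠ 0) {x y u v x' y' u' v' : ℤ}
    (hx : x + u = x' + u') (hy : y + v = y' + v') :
    a ^ x * b ^ y * (a ^ u * b ^ v) = a ^ x' * b ^ y' * (a ^ u' * b ^ v') := by
  rw [show a ^ x * b ^ y * (a ^ u * b ^ v) = a ^ (x + u) * b ^ (y + v) from by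
    rw [zpow_add₀ ha, zpow_add₀ hb]; ring, hx, hy, zpow_add₀ ha, zpow_add₀ hb]
  ring

end aux

/-- For every real τ, every δ > 0, and every integer p ≥ 1:
δ^{p−2} H_p(τ,δ) = S_{p−1} T_p − S_p T_{p−1}. -/
theorem deltaPow_mul_Hp_eq (τ δ : ℝ) (hδ : 0 < δ) (p : ℕ) (hp : 1 ≤ p) :
    (δ : ℂ) ^ ((p : ℤ) - 2) * Hp p τ δ
      = Sseq τ δ (p - 1) * Tseq τ δ p - Sseq τ δ p * Tseq τ δ (p - 1) := by
  obtain ⟨q, rfl⟩ : ∃ q, p = q + 1 := ⟨p - 1, by omega⟩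
  set a := lam1 τ δ with ha
  set b := lam2 τ δ with hb
  have hsq : (((τ : ℂ) ^ 2 - 4 * (δ : ℂ)) ^ ((1 : ℂ) / 2)) ^ 2
      = (τ : ℂ) ^ 2 - 4 * (δ : ℂ) := by
    set z : ℂ := (τ : ℂ) ^ 2 - 4 * (δ : ℂ) with hz
    by_cases h0 : z = 0
    · rw [h0, Complex.zero_cpow (by norm_num)]; ring
    · rw [sq, ← Complex.cpow_add _ _ h0]
      norm_num
  have hab : a * b = (δ : ℂ) := by
    rw [ha, hb, lam1, lam2]
    linear_combination (-(1:ℂ)/4) * hsq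
  have hδ0 : (δ : ℂ) ≠ 0 := by simpa using ne_of_gt hδ
  have ha0 : a ≠ 0 := fun h => hδ0 (by rw [← hab, h, zero_mul])
  have hb0 : b ≠ 0 := fun h => hδ0 (by rw [← hab, h, mul_zero])
  have hS : ∀ j, Sseq τ δ j = Sgen a b j := fun _ => rfl
  rcases Nat.eq_zero_or_pos q with hq | hq
  · subst hq
    simp [Hp, Tseq, Sseq]
  -- q ≥ 1 case
  simp only [Nat.add_sub_cancel]
  -- LHS = ∑ j < q, δ^j * Sgen (q - j)
  have hL : (δ : ℂ) ^ (((q + 1 : ℕ) : ℤ) - 2) * Hp (q + 1) τ δ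
      = ∑ j ∈ Finset.range q, (δ : ℂ) ^ j * Sgen a b (q - j) := by
    rw [Hp]
    simp only [Nat.add_sub_cancel]
    rw [Finset.mul_sum]
    have step1 : ∀ j ∈ Finset.range q,
        (δ : ℂ) ^ (((q + 1 : ℕ) : ℤ) - 2) *
          ∑ k ∈ Finset.range (j + 1), a ^ ((k : ℤ) - (j : ℤ)) * b ^ (-(k : ℤ))
        = (δ : ℂ) ^ (q - 1 - j) * Sgen a b (j + 1) := by
      intro j hj
      have hjq := Finset.mem_range.mp hj
      rw [Finset.mul_sum, Sgen, Finset.mul_sum]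
      conv_lhs => rw [← Finset.sum_range_reflect]
      refine Finset.sum_congr rfl fun k hk => ?_
      have hkj := Finset.mem_range.mp hk
      -- replace δ's by a*b
      rw [← hab]
      rw [show ((a * b) : ℂ) ^ (((q + 1 : ℕ) : ℤ) - 2) = a ^ ((q:ℤ)-1) * b ^ ((q:ℤ)-1) from by
        rw [mul_zpow]; push_cast; ring_nf]
      rw [show ((a * b) : ℂ) ^ (q - 1 - j) = a ^ (((q - 1 - j : ℕ)):ℤ) * b ^ (((q - 1 - j : ℕ)):ℤ) from by
        rw [mul_pow, zpow_natCast, zpow_natCast]]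
      rw [show a ^ (j + 1 - 1 - k) * b ^ k
          = a ^ (((j + 1 - 1 - k : ℕ)):ℤ) * b ^ (((k : ℕ)):ℤ) from by
        rw [zpow_natCast, zpow_natCast]]
      refine zpow_mul_zpow_eq a b ha0 hb0 ?_ ?_
      · push_cast; omega
      · push_cast; omega
    rw [Finset.sum_congr rfl step1]
    rw [← Finset.sum_range_reflect (fun j => (δ:ℂ) ^ j * Sgen a b (q - j)) q]
    refine Finset.sum_congr rfl fun j hj => ?_
    have hjq := Finset.mem_range.mp hj
    have e8 : q - (q - 1 - j) = j + 1 := by omega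
    rw [e8]
  rw [hL, hS, hS]
  -- T sums
  obtain ⟨r, rfl⟩ : ∃ r, q = r + 1 := ⟨q - 1, by omega⟩
  have hT1 : Tseq τ δ (r + 1 + 1) = ∑ i ∈ Finset.range (r + 1), Sgen a b (i + 1) := by
    rw [Tseq]
    simp only [Nat.add_sub_cancel]
    rw [← Finset.Ico_add_one_right_eq_Icc, Finset.sum_Ico_eq_sum_range]
    refine Finset.sum_congr (by norm_num) fun i _ => ?_
    rw [hS, add_comm]
  have hT0 : Tseq τ δ (r + 1) = ∑ i ∈ Finset.range (r + 1), Sgen a b i := by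
    rw [Tseq]
    simp only [Nat.add_sub_cancel]
    rw [← Finset.Ico_add_one_right_eq_Icc, Finset.sum_Ico_eq_sum_range]
    rw [Finset.sum_range_succ' (fun i => Sgen a b i) r]
    rw [Sgen_zero, add_zero]
    refine Finset.sum_congr (by norm_num) fun i _ => ?_
    rw [hS, add_comm]
  rw [hT1, hT0, Finset.mul_sum, Finset.mul_sum, ← Finset.sum_sub_distrib]
  refine Finset.sum_congr rfl fun i hi => ?_
  have hir := Finset.mem_range.mp hi
  have hk := Sgen_key a b i (r - i)
  have e1 : i + (r - i) + 1 = r + 1 := by omega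
  have e2 : i + (r - i) + 2 = r + 1 + 1 := by omega
  have e3 : r - i + 1 = r + 1 - i := by omega
  rw [e1, e2, e3, hab] at hk
  exact hk.symm
end

section
/- Let p ≥ 2 be an integer and let (τ,δ) ∈ 𝒯 with τ = g_p(δ) = 2√δ cos(π/p). Then S_{p+1} = −δ^{p/2} and T_p = (1 + δ^{p/2})/(δ − τ + 1). -/
open Complex in
lemma cpow_half_neg (x : ℝ) (hx : 0 < x) :
    ((-x : ℝ) : ℂ) ^ ((1:ℂ)/2) = Real.sqrt x * I := by
  have hne : ((-x : ℝ) : ℂ) ≠ 0 := by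
    simp only [ne_eq, Complex.ofReal_eq_zero]; intro h; linarith [neg_eq_zero.mp h]
  rw [cpow_def_of_ne_zero hne]
  have hlog : Complex.log ((-x : ℝ) : ℂ) = Real.log x + Real.pi * I := by
    rw [Complex.log]
    have harg : Complex.arg ((-x : ℝ) : ℂ) = Real.pi := Complex.arg_ofReal_of_neg (by linarith)
    rw [harg]
    congr 1
    simp [Complex.norm_real, abs_of_pos hx]
  rw [hlog]
  have : ((Real.log x : ℂ) + Real.pi * I) * (1/2) = (Real.log x / 2 : ℝ) + (Real.pi/2) * I := by
    push_cast; ring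
  rw [this, Complex.exp_add]
  have h1 : Complex.exp ((Real.log x / 2 : ℝ) : ℂ) = (Real.sqrt x : ℂ) := by
    rw [← Complex.ofReal_exp]
    congr 1
    rw [Real.sqrt_eq_rpow, Real.rpow_def_of_pos hx]
    ring_nf
  have h2 : Complex.exp ((Real.pi : ℂ)/2 * I) = I := by
    have : ((Real.pi : ℂ)/2) = ((Real.pi/2 : ℝ) : ℂ) := by push_cast; ring
    rw [this, Complex.exp_mul_I]; simp
  rw [h1, h2]

/-- Let p ≥ 2 and (τ,δ) ∈ 𝒯 with τ = g_p(δ) = 2√δ cos(π/p).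
Then S_{p+1} = −δ^{p/2} and T_p = (1 + δ^{p/2})/(δ − τ + 1). -/
theorem Sseq_Tseq_at_resonance (p : ℕ) (hp : 2 ≤ p) (τ δ : ℝ)
    (hδ0 : 0 < δ) (hδ1 : δ < 1) (hτT : |τ| < δ + 1)
    (hres : τ = 2 * Real.sqrt δ * Real.cos (Real.pi / p)) :
    Sseq τ δ (p + 1) = ((-(δ ^ ((p : ℝ) / 2)) : ℝ) : ℂ) ∧
    Tseq τ δ p = (((1 + δ ^ ((p : ℝ) / 2)) / (δ - τ + 1) : ℝ) : ℂ) := by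
  have hpR : (2:ℝ) ≤ (p:ℝ) := by exact_mod_cast hp
  have hpR0 : (0:ℝ) < (p:ℝ) := by linarith
  set θ := Real.pi / p with hθ
  set r := Real.sqrt δ with hr
  have hr0 : 0 < r := Real.sqrt_pos.mpr hδ0
  have hr2 : r ^ 2 = δ := Real.sq_sqrt hδ0.le
  have hθ0 : 0 < θ := div_pos Real.pi_pos hpR0
  have hθπ : θ < Real.pi := by
    rw [hθ, div_lt_iff₀ hpR0]
    nlinarith [Real.pi_pos]
  have hsin : 0 < Real.sin θ := Real.sin_pos_of_pos_of_lt_pi hθ0 hθπ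
  set m := 2 * r * Real.sin θ with hm
  have hm0 : 0 < m := by positivity
  have hdiscR : τ ^ 2 - 4 * δ = -(m ^ 2) := by
    have hsc := Real.sin_sq_add_cos_sq θ
    rw [hres, hm]; nlinarith
  have hdisc : (τ:ℂ) ^ 2 - 4 * (δ:ℂ) = ((-(m ^ 2) : ℝ) : ℂ) := by
    rw [← hdiscR]; push_cast; ring
  have hs : ((τ:ℂ) ^ 2 - 4 * (δ:ℂ)) ^ ((1:ℂ)/2) = (m : ℂ) * Complex.I := by
    rw [hdisc, cpow_half_neg _ (by positivity : (0:ℝ) < m ^ 2), Real.sqrt_sq hm0.le]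
  set a := lam1 τ δ with ha_def
  set b := lam2 τ δ with hb_def
  have ha : a = (r:ℂ) * Complex.exp ((θ:ℂ) * Complex.I) := by
    rw [ha_def]; unfold lam1
    rw [hs, Complex.exp_mul_I, hres, hm]
    push_cast; ring
  have hb : b = (r:ℂ) * Complex.exp (-(θ:ℂ) * Complex.I) := by
    rw [hb_def]; unfold lam2
    rw [hs, Complex.exp_mul_I, Complex.cos_neg, Complex.sin_neg, hres, hm]
    push_cast; ring
  have hsum : a + b = (τ:ℂ) := by
    rw [ha_def, hb_def]; unfold lam1 lam2; ring
  have hab : a * b = (δ:ℂ) := by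
    rw [ha, hb, ← hr2]
    have : Complex.exp ((θ:ℂ) * Complex.I) * Complex.exp (-(θ:ℂ) * Complex.I) = 1 := by
      rw [← Complex.exp_add]; ring_nf; exact Complex.exp_zero
    push_cast
    calc (r:ℂ) * Complex.exp ((θ:ℂ) * Complex.I) * ((r:ℂ) * Complex.exp (-(θ:ℂ) * Complex.I))
        = (r:ℂ)^2 * (Complex.exp ((θ:ℂ) * Complex.I) * Complex.exp (-(θ:ℂ) * Complex.I)) := by ring
      _ = (r:ℂ)^2 := by rw [this, mul_one]
  set A := ((δ ^ ((p:ℝ)/2) : ℝ) : ℂ) with hA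
  have hrp : r ^ p = δ ^ ((p:ℝ)/2) := by
    rw [hr, Real.sqrt_eq_rpow, ← Real.rpow_natCast (δ ^ ((1:ℝ)/2)) p,
      ← Real.rpow_mul hδ0.le]
    congr 1; ring
  have hpθ : (p:ℝ) * θ = Real.pi := by
    rw [hθ]; field_simp
  have hap : a ^ p = -A := by
    rw [ha, mul_pow, ← Complex.exp_nat_mul]
    have h1 : (p:ℂ) * ((θ:ℂ) * Complex.I) = (Real.pi:ℂ) * Complex.I := by
      have : (((p:ℝ) * θ : ℝ) : ℂ) = ((Real.pi : ℝ) : ℂ) := by rw [hpθ]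
      push_cast at this
      rw [← mul_assoc, this]
    rw [h1, Complex.exp_pi_mul_I, hA, ← hrp]
    push_cast; ring
  have hbp : b ^ p = -A := by
    rw [hb, mul_pow, ← Complex.exp_nat_mul]
    have h1 : (p:ℂ) * (-(θ:ℂ) * Complex.I) = -((Real.pi:ℂ) * Complex.I) := by
      have : (((p:ℝ) * θ : ℝ) : ℂ) = ((Real.pi : ℝ) : ℂ) := by rw [hpθ]
      push_cast at this
      rw [show (p:ℂ) * (-(θ:ℂ) * Complex.I) = -((p:ℂ) * (θ:ℂ) * Complex.I) by ring, this]
    rw [h1, Complex.exp_neg, Complex.exp_pi_mul_I, hA, ← hrp]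
    push_cast; ring
  have hamb : a - b = (m:ℂ) * Complex.I := by
    rw [ha_def, hb_def]; unfold lam1 lam2; rw [hs]; ring
  have hba : b - a ≠ 0 := by
    rw [show b - a = -(a - b) by ring, hamb]
    simp [Complex.ext_iff]
    intro h
    exact absurd h (ne_of_gt hm0)
  have hq : (δ:ℂ) - τ + 1 = (a - 1) * (b - 1) := by
    have : (a - 1) * (b - 1) = a * b - (a + b) + 1 := by ring
    rw [this, hab, hsum]
  have hplusR : (0:ℝ) < δ - τ + 1 := by
    have := abs_lt.mp hτT; linarith [this.2]
  have hplus0 : (δ:ℂ) - τ + 1 ≠ 0 := by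
    have h1 : ((δ - τ + 1 : ℝ) : ℂ) ≠ 0 := Complex.ofReal_ne_zero.mpr (ne_of_gt hplusR)
    intro h; apply h1; rw [← h]; push_cast; ring
  have ha1 : a - 1 ≠ 0 := by
    intro h; apply hplus0; rw [hq, h, zero_mul]
  have hb1 : b - 1 ≠ 0 := by
    intro h; apply hplus0; rw [hq, h, mul_zero]
  have hS : ∀ j : ℕ, Sseq τ δ j * (b - a) = b ^ j - a ^ j := by
    intro j
    have h1 : Sseq τ δ j = ∑ i ∈ Finset.range j, b ^ i * a ^ (j - 1 - i) := by
      unfold Sseq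
      rw [← ha_def, ← hb_def]
      exact Finset.sum_congr rfl (fun i _ => mul_comm _ _)
    rw [h1, geom_sum₂_mul]
  constructor
  · have hS1 : Sseq τ δ (p + 1) = -A := by
      apply mul_right_cancel₀ hba
      rw [hS (p + 1), pow_succ, pow_succ, hap, hbp]
      ring
    rw [hS1, hA]; push_cast; ring
  · have hIcc : Finset.Icc 1 (p - 1) = Finset.Ico 1 p := by
      rw [← Finset.Ico_add_one_right_eq_Icc]
      congr 1
      omega
    have hsplit : ∀ x : ℂ, ∑ i ∈ Finset.range p, x ^ i = 1 + ∑ i ∈ Finset.Ico 1 p, x ^ i := by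
      intro x
      rw [Finset.range_eq_Ico, Finset.sum_eq_sum_Ico_succ_bot (by omega : 0 < p)]
      simp
    have hT1 : Tseq τ δ p * (b - a)
        = (∑ i ∈ Finset.range p, b ^ i) - (∑ i ∈ Finset.range p, a ^ i) := by
      unfold Tseq
      rw [hIcc, Finset.sum_mul, Finset.sum_congr rfl (fun i _ => hS i),
        Finset.sum_sub_distrib, hsplit b, hsplit a]
      ring
    have hG : (∑ i ∈ Finset.range p, b ^ i) * (b - 1) = -A - 1 := by
      rw [geom_sum_mul, hbp]
    have hH : (∑ i ∈ Finset.range p, a ^ i) * (a - 1) = -A - 1 := by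
      rw [geom_sum_mul, hap]
    have hT2 : Tseq τ δ p * ((a - 1) * (b - 1)) = 1 + A := by
      apply mul_right_cancel₀ hba
      linear_combination (a - 1) * (b - 1) * hT1 + (a - 1) * hG - (b - 1) * hH
    have hrhs : (((1 + δ ^ ((p:ℝ)/2)) / (δ - τ + 1) : ℝ) : ℂ) = (1 + A) / ((δ:ℂ) - τ + 1) := by
      rw [hA]; push_cast; ring
    rw [hrhs, eq_div_iff hplus0, hq]
    exact hT2
end

section
/- For every real δ with 0 < δ < 1 and every integer p ≥ 3, setting τ = g_{p/2}(δ) = 2√δ cos(2π/p), one has H_p(τ,δ) = (δ^{p/2} − 1)/((δ − τ + 1) δ^{(p−2)/2}); in particular H_p(g_{p/2}(δ), δ) < 0. -/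
lemma cpow_half_of_neg {x : ℝ} (hx : x < 0) :
    ((x : ℂ)) ^ ((1:ℂ)/2) = (Real.sqrt (-x) : ℂ) * Complex.I := by
  rw [Complex.ofReal_cpow_of_nonpos hx.le]
  rw [show (1:ℂ)/2 = ((1/2:ℝ):ℂ) by norm_num]
  rw [show (-(x:ℂ)) = (((-x : ℝ)):ℂ) by push_cast; ring]
  rw [← Complex.ofReal_cpow (by linarith : (0:ℝ) ≤ -x)]
  rw [← Real.sqrt_eq_rpow]
  congr 1
  rw [show (Real.pi:ℂ)*Complex.I*((1/2:ℝ):ℂ) = ((Real.pi/2 : ℝ):ℂ)*Complex.I by push_cast; ring,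
    Complex.exp_mul_I, ← Complex.ofReal_cos, ← Complex.ofReal_sin,
    Real.cos_pi_div_two, Real.sin_pi_div_two]
  simp
set_option maxHeartbeats 1000000 in
/-- For 0 < δ < 1 and p ≥ 3, setting τ = g_{p/2}(δ) = 2√δ cos(2π/p):
H_p(τ,δ) = (δ^{p/2} − 1)/((δ − τ + 1) δ^{(p−2)/2}), which is negative. -/
theorem Hp_at_gphalf_neg (δ : ℝ) (hδ0 : 0 < δ) (hδ1 : δ < 1) (p : ℕ) (hp : 3 ≤ p)
    (τ : ℝ) (hτ : τ = 2 * Real.sqrt δ * Real.cos (2 * Real.pi / p)) :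
    Hp p τ δ
      = (((δ ^ ((p : ℝ) / 2) - 1) /
          ((δ - τ + 1) * δ ^ (((p : ℝ) - 2) / 2)) : ℝ) : ℂ) ∧
    (δ ^ ((p : ℝ) / 2) - 1) / ((δ - τ + 1) * δ ^ (((p : ℝ) - 2) / 2)) < 0 := by
  
  obtain ⟨m, rfl⟩ : ∃ m, p = m + 3 := ⟨p - 3, by omega⟩
  have hπ := Real.pi_pos
  set s := Real.sqrt δ with hs_def
  have hs0 : 0 < s := Real.sqrt_pos.2 hδ0
  have hs1 : s < 1 := by
    rw [hs_def, show (1:ℝ) = Real.sqrt 1 by simp]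
    exact Real.sqrt_lt_sqrt hδ0.le hδ1
  have hss : s ^ 2 = δ := Real.sq_sqrt hδ0.le
  set θ := 2 * Real.pi / ((m+3 : ℕ) : ℝ) with hθ_def
  have hmpos : (0:ℝ) < ((m+3 : ℕ) : ℝ) := by positivity
  have hθ0 : 0 < θ := by positivity
  have hθπ : θ < Real.pi := by
    rw [hθ_def, div_lt_iff₀ hmpos]
    have : (3:ℝ) ≤ ((m+3:ℕ):ℝ) := by exact_mod_cast Nat.le_add_left 3 m
    nlinarith
  have hsin : 0 < Real.sin θ := Real.sin_pos_of_pos_of_lt_pi hθ0 hθπ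
  -- basic positivity of the denominator
  have hd : 0 < δ - τ + 1 := by
    have hc1 : Real.cos θ ≤ 1 := Real.cos_le_one θ
    nlinarith [sq_nonneg (1 - s)]
  set ω := Complex.exp ((θ:ℂ) * Complex.I) with hω_def
  have hω0 : ω ≠ 0 := Complex.exp_ne_zero _
  have habs : ‖ω‖ = 1 := Complex.norm_exp_ofReal_mul_I θ
  have hs0c : ((s:ℂ)) ≠ 0 := Complex.ofReal_ne_zero.2 hs0.ne'
  -- lam1, lam2
  have hτδ : τ^2 - 4*δ = -(2*s*Real.sin θ)^2 := by
    have hc := Real.sin_sq_add_cos_sq θ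
    rw [hτ]; nlinarith [hss]
  have hneg : τ^2 - 4*δ < 0 := by
    have : 0 < 2*s*Real.sin θ := by positivity
    nlinarith
  have hsqrt : Real.sqrt (-(τ^2 - 4*δ)) = 2*s*Real.sin θ := by
    rw [hτδ, neg_neg, Real.sqrt_sq (by positivity)]
  have hcast : ((τ:ℂ))^2 - 4*(δ:ℂ) = (((τ^2 - 4*δ : ℝ)):ℂ) := by push_cast; ring
  have h1 : lam1 τ δ = (s:ℂ) * ω := by
    rw [lam1, hcast, cpow_half_of_neg hneg, hsqrt, hτ, hω_def, Complex.exp_mul_I]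
    push_cast
    ring
  have h2 : lam2 τ δ = (s:ℂ) * ω⁻¹ := by
    have hinv : ω⁻¹ = Complex.exp (((-θ : ℝ):ℂ) * Complex.I) := by
      rw [hω_def, ← Complex.exp_neg]; push_cast; ring_nf
    rw [lam2, hcast, cpow_half_of_neg hneg, hsqrt, hτ, hinv, Complex.exp_mul_I,
      Complex.ofReal_neg, Complex.cos_neg, Complex.sin_neg]
    push_cast
    ring
  -- roots of unity facts
  have hθp : θ * ((m+3:ℕ):ℝ) = 2 * Real.pi := by
    rw [hθ_def]; field_simp
  have hωp : ω ^ (m+3) = 1 := by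
    rw [hω_def, ← Complex.exp_nat_mul,
      show ((m+3:ℕ):ℂ) * ((θ:ℂ) * Complex.I) = ((θ * ((m+3:ℕ):ℝ) : ℝ):ℂ) * Complex.I by
        push_cast; ring,
      hθp]
    push_cast
    exact Complex.exp_two_pi_mul_I
  have hω2 : ω^2 ≠ 1 := by
    intro h
    rw [hω_def, ← Complex.exp_nat_mul,
      show ((2:ℕ):ℂ) * ((θ:ℂ) * Complex.I) = ((2*θ : ℝ):ℂ) * Complex.I by push_cast; ring,
      Complex.exp_eq_one_iff] at h
    obtain ⟨n, hn⟩ := h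
    rw [show ((n:ℂ)*(2*(Real.pi:ℂ)*Complex.I)) = (((n:ℝ)*(2*Real.pi) : ℝ):ℂ)*Complex.I by
      push_cast; ring] at hn
    have hn' : (2*θ : ℝ) = (n:ℝ)*(2*Real.pi) := by
      exact_mod_cast mul_right_cancel₀ Complex.I_ne_zero hn
    have h0 : (0:ℝ) < (n:ℝ) := by nlinarith
    have h1' : ((n:ℝ)) < 1 := by nlinarith
    have i0 : (0:ℤ) < n := by exact_mod_cast h0
    have i1 : n < 1 := by exact_mod_cast h1'
    omega
  have hω2' : ω^2 - 1 ≠ 0 := sub_ne_zero.2 hω2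
  have hr1 : ω/(s:ℂ) ≠ 1 := by
    intro h
    have h' := congrArg (‖·‖) h
    rw [norm_div, habs, Complex.norm_real, Real.norm_eq_abs, abs_of_pos hs0, norm_one] at h'
    rw [div_eq_one_iff_eq hs0.ne'] at h'
    linarith
  have hr2 : 1/((s:ℂ)*ω) ≠ 1 := by
    intro h
    have h' := congrArg (‖·‖) h
    rw [norm_div, norm_mul, habs, Complex.norm_real, Real.norm_eq_abs, abs_of_pos hs0, norm_one] at h'
    simp only [mul_one] at h'
    rw [div_eq_one_iff_eq hs0.ne'] at h'
    linarith
  have hr1' : ω/(s:ℂ) - 1 ≠ 0 := sub_ne_zero.2 hr1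
  have hr2' : 1/((s:ℂ)*ω) - 1 ≠ 0 := sub_ne_zero.2 hr2
  have hL0 : ((s:ℂ))*ω ≠ 0 := mul_ne_zero hs0c hω0
  have hωs : ω - (s:ℂ) ≠ 0 := by
    intro h
    have h' := congrArg (‖·‖) (sub_eq_zero.mp h)
    rw [habs, Complex.norm_real, Real.norm_eq_abs, abs_of_pos hs0] at h'
    linarith
  have h1ωs : 1 - (s:ℂ)*ω ≠ 0 := by
    intro h
    have h'' : (s:ℂ)*ω = 1 := by linear_combination -h
    have h' := congrArg (‖·‖) h''
    rw [norm_mul, habs, Complex.norm_real, Real.norm_eq_abs, abs_of_pos hs0, mul_one, norm_one] at h'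
    linarith
  -- the term rewrite
  have term : ∀ k j : ℕ, ((s:ℂ)*ω)^((k:ℤ)-(j:ℤ)) * ((s:ℂ)*ω⁻¹)^(-(k:ℤ))
      = (((s:ℂ)*ω)⁻¹)^j * (ω^2)^k := by
    intro k j
    rw [zpow_sub₀ hL0, zpow_neg, zpow_natCast, zpow_natCast, zpow_natCast, ← inv_pow]
    field_simp
    simp only [div_pow, one_pow, mul_pow]
    field_simp
    ring
  -- inner sums
  have hsum1 : ∀ j ∈ Finset.range (m+2),
      (∑ k ∈ Finset.range (j+1), ((s:ℂ)*ω)^((k:ℤ)-(j:ℤ)) * ((s:ℂ)*ω⁻¹)^(-(k:ℤ)))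
      = (ω^2/(ω^2-1)) * (ω/(s:ℂ))^j - (1/(ω^2-1)) * (1/((s:ℂ)*ω))^j := by
    intro j _
    rw [Finset.sum_congr rfl (fun k _ => term k j), ← Finset.mul_sum, geom_sum_eq hω2,
      pow_succ]
    field_simp
    simp only [div_pow, one_pow, mul_pow]
    field_simp
    ring
  have hωm : ω^(m+2) = ω⁻¹ := by
    have hstep : ω^(m+2) = ω^(m+3) * ω⁻¹ := by
      rw [pow_succ]; field_simp; ring
    rw [hstep, hωp, one_mul]
  have e2 : (ω/(s:ℂ))^(m+2) = ω⁻¹/((s:ℂ)^(m+2)) := by rw [div_pow, hωm]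
  have e3 : (1/((s:ℂ)*ω))^(m+2) = ω/((s:ℂ)^(m+2)) := by
    rw [div_pow, one_pow, mul_pow, hωm]
    field_simp
  have hτω : (τ:ℂ) = (s:ℂ)*ω + (s:ℂ)*ω⁻¹ := by
    rw [← h1, ← h2, lam1, lam2]; ring
  have hδs : (δ:ℂ) = (s:ℂ)^2 := by rw [← hss]; push_cast; ring
  have hdc : ((s:ℂ)^2 - ((s:ℂ)*ω + (s:ℂ)*ω⁻¹) + 1) ≠ 0 := by
    rw [← hτω, ← hδs]
    have h' : ((δ - τ + 1 : ℝ) : ℂ) ≠ 0 := Complex.ofReal_ne_zero.2 hd.ne'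
    push_cast at h'
    exact h'
  -- rpow computations
  have hd1 : δ ^ (((m+3:ℕ):ℝ)/2) = s ^ (m+3) := by
    rw [show (((m+3:ℕ)):ℝ)/2 = (1/2) * ((m+3:ℕ):ℝ) by ring,
      Real.rpow_mul hδ0.le, ← Real.sqrt_eq_rpow, Real.rpow_natCast]
  have hd2 : δ ^ (((((m+3:ℕ)):ℝ) - 2)/2) = s ^ (m+1) := by
    rw [show (((((m+3:ℕ)):ℝ)) - 2)/2 = (1/2) * (((m+1:ℕ)):ℝ) by push_cast; ring,
      Real.rpow_mul hδ0.le, ← Real.sqrt_eq_rpow, Real.rpow_natCast]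
  have hrhs : (((s^(m+3) - 1)/((δ - τ + 1) * s^(m+1)) : ℝ) : ℂ)
      = ((s:ℂ)^(m+3) - 1)/(((δ:ℂ) - (τ:ℂ) + 1) * (s:ℂ)^(m+1)) := by
    push_cast; ring
  constructor
  · rw [hd1, hd2, hrhs, Hp, h1, h2]
    rw [show m+3-1 = m+2 from rfl, Finset.sum_congr rfl hsum1, Finset.sum_sub_distrib,
      ← Finset.mul_sum, ← Finset.mul_sum, geom_sum_eq hr1, geom_sum_eq hr2, e2, e3,
      show ((s:ℂ))^(m+3) = (s:ℂ)^(m+1)*(s:ℂ)^2 by ring,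
      show ((s:ℂ))^(m+2) = (s:ℂ)^(m+1)*(s:ℂ) by ring]
    have hA : ((s:ℂ))^(m+1) ≠ 0 := pow_ne_zero _ hs0c
    have hdc2 : ((δ:ℂ) - (τ:ℂ) + 1) ≠ 0 := by
      have h' : ((δ - τ + 1 : ℝ) : ℂ) ≠ 0 := Complex.ofReal_ne_zero.2 hd.ne'
      push_cast at h'
      exact h'
    have hDR : ((δ:ℂ) - (τ:ℂ) + 1) * ω = (1 - (s:ℂ)*ω)*(ω - (s:ℂ)) := by
      rw [hδs, hτω]
      field_simp
      ring
    have F1 : ((ω⁻¹/((s:ℂ)^(m+1)*(s:ℂ)) - 1)/(ω/(s:ℂ) - 1))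
        = (s:ℂ)*(1 - (s:ℂ)^(m+1)*(s:ℂ)*ω)/(((s:ℂ)^(m+1)*(s:ℂ))*ω*(ω-(s:ℂ))) := by
      rw [div_eq_div_iff hr1' (by exact mul_ne_zero (mul_ne_zero (mul_ne_zero hA hs0c) hω0) hωs)]
      field_simp
    have F2 : ((ω/((s:ℂ)^(m+1)*(s:ℂ)) - 1)/(1/((s:ℂ)*ω) - 1))
        = (s:ℂ)*ω*(ω - (s:ℂ)^(m+1)*(s:ℂ))/(((s:ℂ)^(m+1)*(s:ℂ))*(1-(s:ℂ)*ω)) := by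
      rw [div_eq_div_iff hr2' (by exact mul_ne_zero (mul_ne_zero hA hs0c) h1ωs)]
      field_simp
    have hD' : (1-(s:ℂ)*ω)*(ω-(s:ℂ))*((s:ℂ)^(m+1)) ≠ 0 :=
      mul_ne_zero (mul_ne_zero h1ωs hωs) hA
    have hRHS2 : ((s:ℂ)^(m+1)*(s:ℂ)^2 - 1)/(((δ:ℂ)-(τ:ℂ)+1)*(s:ℂ)^(m+1))
        = ω*((s:ℂ)^(m+1)*(s:ℂ)^2 - 1)/((1-(s:ℂ)*ω)*(ω-(s:ℂ))*((s:ℂ)^(m+1))) := by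
      rw [div_eq_div_iff (mul_ne_zero hdc2 hA) hD']
      linear_combination -(((s:ℂ)^(m+1)*(s:ℂ)^2 - 1) * (s:ℂ)^(m+1)) * hDR
    have hB1 : (ω^2-1)*(((s:ℂ)^(m+1)*(s:ℂ))*ω*(ω-(s:ℂ))) ≠ 0 :=
      mul_ne_zero hω2' (mul_ne_zero (mul_ne_zero (mul_ne_zero hA hs0c) hω0) hωs)
    have hB2 : (ω^2-1)*(((s:ℂ)^(m+1)*(s:ℂ))*(1-(s:ℂ)*ω)) ≠ 0 :=
      mul_ne_zero hω2' (mul_ne_zero (mul_ne_zero hA hs0c) h1ωs)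
    rw [F1, F2, hRHS2, div_mul_div_comm, div_mul_div_comm, one_mul,
      div_sub_div _ _ hB1 hB2, div_eq_div_iff (mul_ne_zero hB1 hB2) hD']
    ring
  · rw [hd1, hd2]
    apply div_neg_of_neg_of_pos
    · have : s ^ (m+3) < 1 := pow_lt_one₀ hs0.le hs1 (by omega)
      linarith
    · exact mul_pos hd (by positivity)
end

section
/- For every vector b = (b₁, b₂) ∈ ℝ² and every integer p ≥ 1: Σ_{j=0}^{p−1} A^j b = S_p b + T_p v, where v = ((1−a₂₂)b₁ + a₁₂b₂, a₂₁b₁ + (1−a₁₁)b₂). -/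
/-!
Context: A is a real 2×2 matrix with entries a₁₁ = A 0 0, a₁₂ = A 0 1,
a₂₁ = A 1 0, a₂₂ = A 1 1, trace τ = a₁₁ + a₂₂, determinant δ = a₁₁a₂₂ − a₁₂a₂₁.
S₀ = 0, S₁ = 1, S_{j+1} = τ S_j − δ S_{j−1} for j ≥ 1, T_j = Σ_{i=1}^{j−1} S_i.
-/

private lemma key_pow (A : Matrix (Fin 2) (Fin 2) ℝ) (S : ℕ → ℝ)
    (hS0 : S 0 = 0) (hS1 : S 1 = 1)
    (hSrec : ∀ j : ℕ, 1 ≤ j →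
      S (j + 1) = (A 0 0 + A 1 1) * S j - (A 0 0 * A 1 1 - A 0 1 * A 1 0) * S (j - 1)) :
    ∀ p : ℕ, 1 ≤ p → (A ^ p) = S p • A -
      ((A 0 0 * A 1 1 - A 0 1 * A 1 0) * S (p - 1)) • (1 : Matrix (Fin 2) (Fin 2) ℝ) := by
  intro p hp
  induction p, hp using Nat.le_induction with
  | base => simp [hS0, hS1]
  | succ p hp ih =>
    have hA2 : A * A = (A 0 0 + A 1 1) • A -
        ((A 0 0 * A 1 1 - A 0 1 * A 1 0)) • (1 : Matrix (Fin 2) (Fin 2) ℝ) := by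
      ext i j
      fin_cases i <;> fin_cases j <;>
        simp [Matrix.mul_apply, Fin.sum_univ_two, Matrix.one_apply] <;> ring
    have h1 : A ^ (p + 1) = A ^ p * A := pow_succ A p
    rw [h1, ih, Matrix.sub_mul, Matrix.smul_mul, Matrix.smul_mul, Matrix.one_mul, hA2,
      hSrec p hp]
    have : p + 1 - 1 = p := rfl
    rw [this]
    ext i j
    fin_cases i <;> fin_cases j <;>
      simp [Matrix.sub_apply, Matrix.smul_apply, Matrix.one_apply] <;> ring

/-- For every b ∈ ℝ² and every p ≥ 1: Σ_{j=0}^{p−1} A^j b = S_p b + T_p v,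
where v = ((1−a₂₂)b₁ + a₁₂b₂, a₂₁b₁ + (1−a₁₁)b₂). -/
theorem sum_matrix_pow_mulVec (A : Matrix (Fin 2) (Fin 2) ℝ) (S T : ℕ → ℝ)
    (hS0 : S 0 = 0) (hS1 : S 1 = 1)
    (hSrec : ∀ j : ℕ, 1 ≤ j →
      S (j + 1) = (A 0 0 + A 1 1) * S j - (A 0 0 * A 1 1 - A 0 1 * A 1 0) * S (j - 1))
    (hT : ∀ j : ℕ, T j = ∑ i ∈ Finset.Icc 1 (j - 1), S i)
    (b : Fin 2 → ℝ) (p : ℕ) (hp : 1 ≤ p) :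
    ∑ j ∈ Finset.range p, (A ^ j).mulVec b
      = S p • b + T p • ![(1 - A 1 1) * b 0 + A 0 1 * b 1,
                          A 1 0 * b 0 + (1 - A 0 0) * b 1] := by
  induction p, hp using Nat.le_induction with
  | base =>
    have hT1 : T 1 = 0 := by simp [hT]
    simp [hT1, hS1, Matrix.mulVec_one]
    funext i; fin_cases i <;> simp
  | succ p hp ih =>
    rw [Finset.sum_range_succ, ih]
    have hTsucc : T (p + 1) = T p + S p := by
      have hp' : p - 1 + 1 = p := Nat.succ_pred_eq_of_pos hp
      rw [hT, hT]
      have h2 : p + 1 - 1 = p - 1 + 1 := by omega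
      rw [h2, Finset.sum_Icc_succ_top (by omega), hp']
    have hkey := key_pow A S hS0 hS1 hSrec p hp
    have hmv : (A ^ p).mulVec b = S p • A.mulVec b
        - ((A 0 0 * A 1 1 - A 0 1 * A 1 0) * S (p - 1)) • b := by
      rw [hkey, Matrix.sub_mulVec, Matrix.smul_mulVec, Matrix.smul_mulVec,
        Matrix.one_mulVec]
    rw [hmv, hTsucc, hSrec p hp]
    funext i
    fin_cases i <;>
      simp [Matrix.mulVec, dotProduct, Fin.sum_univ_two, Matrix.vecHead,
        Matrix.vecTail, Pi.smul_apply, smul_eq_mul] <;> ring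
end

section
/- Suppose τ² ≠ 4δ and δ − τ + 1 ≠ 0, and let λ₁, λ₂ be the two (possibly complex) eigenvalues of A. Let b = (b₁, b₂) ∈ ℝ², β = (1−a₂₂)b₁ + a₁₂b₂, and let (b_{1p}, b_{2p}) = Σ_{j=0}^{p−1} A^j b. Then for every integer p ≥ 1: (1 − S_{p+1} + a₁₁ S_p) b_{1p} + a₁₂ S_p b_{2p} = (1 − λ₁^p)(1 − λ₂^p) β / ((1 − λ₁)(1 − λ₂)) (an identity of complex numbers). -/
/-!
Context: A is a real 2×2 matrix with entries a₁₁ = A 0 0, a₁₂ = A 0 1,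
a₂₁ = A 1 0, a₂₂ = A 1 1, trace τ = a₁₁ + a₂₂, determinant δ = a₁₁a₂₂ − a₁₂a₂₁.
S₀ = 0, S₁ = 1, S_{j+1} = τ S_j − δ S_{j−1} for j ≥ 1.
The eigenvalues of A are λ₁ = (τ + √(τ²−4δ))/2 and λ₂ = (τ − √(τ²−4δ))/2
(complex principal square root).
-/

/-- Suppose τ² ≠ 4δ and δ − τ + 1 ≠ 0.  With β = (1−a₂₂)b₁ + a₁₂b₂ and
(b_{1p}, b_{2p}) = Σ_{j=0}^{p−1} A^j b, for every p ≥ 1: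
(1 − S_{p+1} + a₁₁ S_p) b_{1p} + a₁₂ S_p b_{2p}
  = (1 − λ₁^p)(1 − λ₂^p) β / ((1 − λ₁)(1 − λ₂)), as complex numbers. -/
theorem detK_eq (A : Matrix (Fin 2) (Fin 2) ℝ) (S : ℕ → ℝ)
    (hS0 : S 0 = 0) (hS1 : S 1 = 1)
    (hSrec : ∀ j : ℕ, 1 ≤ j →
      S (j + 1) = (A 0 0 + A 1 1) * S j - (A 0 0 * A 1 1 - A 0 1 * A 1 0) * S (j - 1))
    (hdisc : (A 0 0 + A 1 1) ^ 2 ≠ 4 * (A 0 0 * A 1 1 - A 0 1 * A 1 0))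
    (hden : (A 0 0 * A 1 1 - A 0 1 * A 1 0) - (A 0 0 + A 1 1) + 1 ≠ 0)
    (b : Fin 2 → ℝ) (p : ℕ) (hp : 1 ≤ p) :
    let τ : ℝ := A 0 0 + A 1 1
    let δ : ℝ := A 0 0 * A 1 1 - A 0 1 * A 1 0
    let lam1 : ℂ := ((τ : ℂ) + ((τ : ℂ) ^ 2 - 4 * (δ : ℂ)) ^ ((1 : ℂ) / 2)) / 2
    let lam2 : ℂ := ((τ : ℂ) - ((τ : ℂ) ^ 2 - 4 * (δ : ℂ)) ^ ((1 : ℂ) / 2)) / 2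
    let β : ℝ := (1 - A 1 1) * b 0 + A 0 1 * b 1
    let bp : Fin 2 → ℝ := ∑ j ∈ Finset.range p, (A ^ j).mulVec b
    (((1 - S (p + 1) + A 0 0 * S p) * bp 0 + A 0 1 * S p * bp 1 : ℝ) : ℂ)
      = (1 - lam1 ^ p) * (1 - lam2 ^ p) * (β : ℂ) / ((1 - lam1) * (1 - lam2)) := by
  intro τ δ lam1 lam2 β bp
  have hτ : τ = A 0 0 + A 1 1 := rfl
  have hδ : δ = A 0 0 * A 1 1 - A 0 1 * A 1 0 := rfl
  set s : ℂ := ((τ : ℂ) ^ 2 - 4 * (δ : ℂ)) ^ ((1 : ℂ) / 2) with hs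
  have hlam1 : lam1 = ((τ : ℂ) + s) / 2 := rfl
  have hlam2 : lam2 = ((τ : ℂ) - s) / 2 := rfl
  have hβ : β = (1 - A 1 1) * b 0 + A 0 1 * b 1 := rfl
  have hbpdef : bp = ∑ j ∈ Finset.range p, (A ^ j).mulVec b := rfl
  -- square root
  have hzR : (τ : ℝ) ^ 2 - 4 * δ ≠ 0 := sub_ne_zero.mpr (by rw [hτ, hδ]; exact hdisc)
  have hz : ((τ : ℂ)) ^ 2 - 4 * (δ : ℂ) ≠ 0 := by exact_mod_cast hzR
  have hs2 : s ^ 2 = (τ : ℂ) ^ 2 - 4 * (δ : ℂ) := by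
    rw [hs, sq, ← Complex.cpow_add _ _ hz]
    norm_num
  have hsum : lam1 + lam2 = (τ : ℂ) := by rw [hlam1, hlam2]; ring
  have hmul : lam1 * lam2 = (δ : ℂ) := by
    rw [hlam1, hlam2]
    linear_combination (-1/4 : ℂ) * hs2
  -- denominator
  have hdenR : (1 : ℝ) - τ + δ ≠ 0 := by
    rw [hτ, hδ]; intro h; exact hden (by linarith)
  have hneC : (1 : ℂ) - (τ : ℂ) + (δ : ℂ) ≠ 0 := by exact_mod_cast hdenR
  have hd1 : (1 - lam1) * (1 - lam2) = 1 - (τ : ℂ) + (δ : ℂ) := by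
    linear_combination hmul - hsum
  -- eigenvalue recurrences
  have hQ1 : lam1 ^ 2 = (τ : ℂ) * lam1 - (δ : ℂ) := by
    rw [hlam1]; linear_combination (1/4 : ℂ) * hs2
  have hQ2 : lam2 ^ 2 = (τ : ℂ) * lam2 - (δ : ℂ) := by
    rw [hlam2]; linear_combination (1/4 : ℂ) * hs2
  have hSrecC : ∀ j : ℕ, 1 ≤ j →
      ((S (j + 1) : ℝ) : ℂ) = (τ : ℂ) * (S j : ℝ) - (δ : ℂ) * (S (j - 1) : ℝ) := by
    intro j hj
    rw [hSrec j hj, ← hτ, ← hδ]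
    push_cast
    ring
  have hpowgen : ∀ lam : ℂ, lam ^ 2 = (τ : ℂ) * lam - (δ : ℂ) →
      ∀ j : ℕ, 1 ≤ j → lam ^ j = ((S j : ℝ) : ℂ) * lam - (δ : ℂ) * ((S (j - 1) : ℝ) : ℂ) := by
    intro lam hQ j hj
    induction j, hj using Nat.le_induction with
    | base => simp [hS1, hS0]
    | succ j hj ih =>
      have hstep := hSrecC j hj
      calc lam ^ (j + 1) = lam ^ j * lam := by ring
        _ = (((S j : ℝ) : ℂ) * lam - (δ : ℂ) * ((S (j - 1) : ℝ) : ℂ)) * lam := by rw [ih]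
        _ = ((S j : ℝ) : ℂ) * lam ^ 2 - (δ : ℂ) * ((S (j - 1) : ℝ) : ℂ) * lam := by ring
        _ = ((S (j + 1) : ℝ) : ℂ) * lam - (δ : ℂ) * ((S (j + 1 - 1) : ℝ) : ℂ) := by
            rw [hQ, hstep]; simp; ring
  obtain ⟨q, rfl⟩ : ∃ q, p = q + 1 := ⟨p - 1, (Nat.succ_pred_eq_of_pos hp).symm⟩
  have h1p := hpowgen lam1 hQ1 (q + 1) (Nat.le_add_left 1 q)
  have h2p := hpowgen lam2 hQ2 (q + 1) (Nat.le_add_left 1 q)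
  simp only [Nat.add_sub_cancel] at h1p h2p
  -- numerator as a real number
  have hnum : (1 - lam1 ^ (q + 1)) * (1 - lam2 ^ (q + 1))
      = ((1 - τ * S (q + 1) + 2 * δ * S q
          + δ * (S (q + 1) ^ 2 - τ * S (q + 1) * S q + δ * S q ^ 2) : ℝ) : ℂ) := by
    rw [h1p, h2p]
    push_cast
    linear_combination (-(((S (q+1) : ℝ) : ℂ)) - (δ : ℂ) * ((S (q+1) : ℝ) : ℂ) * ((S q : ℝ) : ℂ)) * hsum
      + (((S (q+1) : ℝ) : ℂ)) ^ 2 * hmul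
  -- matrix power formula
  have hCH : A * A = (A 0 0 + A 1 1) • A
      - (A 0 0 * A 1 1 - A 0 1 * A 1 0) • (1 : Matrix (Fin 2) (Fin 2) ℝ) := by
    ext i j
    fin_cases i <;> fin_cases j <;>
      simp [Matrix.mul_apply, Fin.sum_univ_two, Matrix.one_apply] <;> ring
  have hApow : ∀ j : ℕ, 1 ≤ j → A ^ j = S j • A
      - (δ * S (j - 1)) • (1 : Matrix (Fin 2) (Fin 2) ℝ) := by
    intro j hj
    induction j, hj using Nat.le_induction with
    | base => simp [hS1, hS0]
    | succ j hj ih =>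
      have hstep := hSrec j hj
      rw [pow_succ, ih]
      rw [sub_mul, Matrix.smul_mul, Matrix.smul_mul, Matrix.one_mul]
      rw [show A * A = ((A 0 0 + A 1 1) • A
        - (A 0 0 * A 1 1 - A 0 1 * A 1 0) • (1 : Matrix (Fin 2) (Fin 2) ℝ)) from hCH]
      rw [hstep, ← hτ, ← hδ]
      simp only [Nat.add_sub_cancel, smul_sub, smul_smul]
      module
  have hentry : ∀ (t c : ℝ) (i : Fin 2),
      ((t • A - c • (1 : Matrix (Fin 2) (Fin 2) ℝ)).mulVec b) i
        = t * (A.mulVec b) i - c * b i := by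
    intro t c i
    simp [Matrix.sub_mulVec, Matrix.smul_mulVec, Matrix.one_mulVec]
    fin_cases i <;> simp <;> ring
  -- sum of powers applied to b, entrywise
  have haux : ∀ r : ℕ, ∀ i : Fin 2, (∑ j ∈ Finset.range (r + 1), (A ^ j).mulVec b) i
      = (∑ j ∈ Finset.range (r + 1), S j) * (A.mulVec b) i
        + (1 - δ * ((∑ j ∈ Finset.range (r + 1), S j) - S r)) * b i := by
    intro r
    induction r with
    | zero =>
      intro i
      simp [hS0, Matrix.one_mulVec]
      fin_cases i <;> rfl
    | succ r ih =>
      intro i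
      rw [Finset.sum_range_succ, Pi.add_apply, ih i,
        hApow (r + 1) (Nat.le_add_left 1 r), hentry]
      simp only [Nat.add_sub_cancel]
      simp only [Finset.sum_range_succ]
      ring
  -- the T-sum identity
  have hT : ∀ r : ℕ, (1 - τ + δ) * (∑ j ∈ Finset.range (r + 1), S j)
      = 1 - S (r + 1) + δ * S r := by
    intro r
    induction r with
    | zero => simp [hS0, hS1]
    | succ r ih =>
      rw [Finset.sum_range_succ, hSrec (r + 1) (Nat.le_add_left 1 r)]
      simp only [Nat.add_sub_cancel]
      rw [← hτ, ← hδ]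
      linear_combination ih
  have hTval : (∑ j ∈ Finset.range (q + 1), S j)
      = (1 - S (q + 1) + δ * S q) / (1 - τ + δ) :=
    eq_div_of_mul_eq hdenR (by rw [mul_comm]; exact hT q)
  have hSq2 : S (q + 1 + 1) = τ * S (q + 1) - δ * S q := by
    rw [hSrec (q + 1) (Nat.le_add_left 1 q), ← hτ, ← hδ]
    simp
  -- final assembly
  have hmv0 : (A.mulVec b) 0 = A 0 0 * b 0 + A 0 1 * b 1 := by
    simp [Matrix.mulVec, dotProduct, Fin.sum_univ_two]
  have hmv1 : (A.mulVec b) 1 = A 1 0 * b 0 + A 1 1 * b 1 := by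
    simp [Matrix.mulVec, dotProduct, Fin.sum_univ_two]
  have hne' : (1 : ℂ) - ((A 0 0 : ℂ) + (A 1 1 : ℂ))
      + ((A 0 0 : ℂ) * (A 1 1 : ℂ) - (A 0 1 : ℂ) * (A 1 0 : ℂ)) ≠ 0 := by
    have := hneC
    rw [hτ, hδ] at this
    push_cast at this
    convert this using 2
  rw [hbpdef, hd1, eq_div_iff hneC, hnum]
  rw [haux q 0, haux q 1, hSq2, hTval, hβ, hmv0, hmv1, hτ, hδ]
  push_cast
  field_simp
  ring
end

section
/- Fix an integer p ≥ 1, a vector b = (b₁, b₂) ∈ ℝ², and suppose a₁₂ ≠ 0 and β = (1−a₂₂)b₁ + a₁₂b₂ ≠ 0. Let b_{1p} be the first component of Σ_{j=0}^{p−1} A^j b. Define the sequence (u_j, w_j) in ℝ² by u₀ = 0, w₀ = −b_{1p}/(a₁₂ β), and (u_j, w_j)ᵀ = A (u_{j−1}, w_{j−1})ᵀ + (S_p/β) b for j ≥ 1. Then u_j = S_p T_j − S_j T_p for every 0 ≤ j ≤ p; in particular u_p = 0. -/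
/-!
Context: A is a real 2×2 matrix with entries a₁₁ = A 0 0, a₁₂ = A 0 1,
a₂₁ = A 1 0, a₂₂ = A 1 1, trace τ = a₁₁ + a₂₂, determinant δ = a₁₁a₂₂ − a₁₂a₂₁.
S₀ = 0, S₁ = 1, S_{j+1} = τ S_j − δ S_{j−1} for j ≥ 1, T_j = Σ_{i=1}^{j−1} S_i.
-/

/-- Fix p ≥ 1, b ∈ ℝ², with a₁₂ ≠ 0 and β = (1−a₂₂)b₁ + a₁₂b₂ ≠ 0.  Let b_{1p} be
the first component of Σ_{j=0}^{p−1} A^j b.  Define (u_j, w_j) by u₀ = 0,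
w₀ = −b_{1p}/(a₁₂ β), and (u_j, w_j)ᵀ = A (u_{j−1}, w_{j−1})ᵀ + (S_p/β) b for j ≥ 1.
Then u_j = S_p T_j − S_j T_p for all 0 ≤ j ≤ p; in particular u_p = 0. -/
theorem u_seq_eq (A : Matrix (Fin 2) (Fin 2) ℝ) (S T : ℕ → ℝ)
    (hS0 : S 0 = 0) (hS1 : S 1 = 1)
    (hSrec : ∀ j : ℕ, 1 ≤ j →
      S (j + 1) = (A 0 0 + A 1 1) * S j - (A 0 0 * A 1 1 - A 0 1 * A 1 0) * S (j - 1))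
    (hT : ∀ j : ℕ, T j = ∑ i ∈ Finset.Icc 1 (j - 1), S i)
    (p : ℕ) (hp : 1 ≤ p) (b : Fin 2 → ℝ)
    (ha12 : A 0 1 ≠ 0)
    (hβ : (1 - A 1 1) * b 0 + A 0 1 * b 1 ≠ 0)
    (u w : ℕ → ℝ)
    (hu0 : u 0 = 0)
    (hw0 : w 0 = -((∑ j ∈ Finset.range p, (A ^ j).mulVec b) 0) /
                  (A 0 1 * ((1 - A 1 1) * b 0 + A 0 1 * b 1)))
    (hrec : ∀ j : ℕ, 1 ≤ j →
      u j = A 0 0 * u (j - 1) + A 0 1 * w (j - 1)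
              + S p / ((1 - A 1 1) * b 0 + A 0 1 * b 1) * b 0 ∧
      w j = A 1 0 * u (j - 1) + A 1 1 * w (j - 1)
              + S p / ((1 - A 1 1) * b 0 + A 0 1 * b 1) * b 1) :
    (∀ j : ℕ, j ≤ p → u j = S p * T j - S j * T p) ∧ u p = 0 := by
  obtain ⟨τ, hτ⟩ : ∃ x : ℝ, x = A 0 0 + A 1 1 := ⟨_, rfl⟩
  obtain ⟨δ, hδ⟩ : ∃ x : ℝ, x = A 0 0 * A 1 1 - A 0 1 * A 1 0 := ⟨_, rfl⟩
  obtain ⟨β, hβdef⟩ : ∃ x : ℝ, x = (1 - A 1 1) * b 0 + A 0 1 * b 1 := ⟨_, rfl⟩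
  rw [← hβdef] at hβ hw0 hrec
  rw [← hτ, ← hδ] at hSrec
  -- T (n+1) = T n + S n
  have hTsucc : ∀ n : ℕ, T (n + 1) = T n + S n := by
    intro n
    match n with
    | 0 => simp [hT, hS0]
    | Nat.succ m =>
        rw [hT (m + 2), hT (m + 1)]
        simp only [show m + 2 - 1 = m + 1 from rfl, show m + 1 - 1 = m from rfl]
        rw [Finset.sum_Icc_succ_top (by omega : 1 ≤ m + 1)]
  have hT0 : T 0 = 0 := by simp [hT]
  have hT1 : T 1 = 0 := by simp [hT]
  -- the key identity E
  have hE : ∀ n : ℕ, τ * T (n + 1) - δ * T n = T (n + 1) + S (n + 1) - 1 := by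
    intro n
    induction n with
    | zero => rw [hT1, hT0, hS1]; ring
    | succ m ih =>
        have hs := hSrec (m + 1) (by omega)
        simp only [Nat.add_sub_cancel] at hs
        rw [hTsucc (m + 1), hTsucc m]
        rw [hTsucc m] at ih
        linear_combination ih - hs
  -- component formulas for A^j b
  obtain ⟨X, hX⟩ : ∃ x : ℝ, x = A 0 0 * b 0 + A 0 1 * b 1 := ⟨_, rfl⟩
  obtain ⟨Y, hY⟩ : ∃ x : ℝ, x = A 1 0 * b 0 + A 1 1 * b 1 := ⟨_, rfl⟩
  have hmv : ∀ v : Fin 2 → ℝ, A.mulVec v 0 = A 0 0 * v 0 + A 0 1 * v 1 ∧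
      A.mulVec v 1 = A 1 0 * v 0 + A 1 1 * v 1 := by
    intro v
    constructor <;> simp [Matrix.mulVec, dotProduct, Fin.sum_univ_two]
  have hpow : ∀ i : ℕ, ((A ^ (i + 1)).mulVec b) 0 = S (i + 1) * X - δ * S i * b 0 ∧
      ((A ^ (i + 1)).mulVec b) 1 = S (i + 1) * Y - δ * S i * b 1 := by
    intro i
    induction i with
    | zero =>
        rw [pow_one]
        rw [hS1, hS0]
        constructor
        · rw [(hmv b).1, hX]; ring
        · rw [(hmv b).2, hY]; ring
    | succ m ih =>
        have hA : (A ^ (m + 1 + 1)).mulVec b = A.mulVec ((A ^ (m + 1)).mulVec b) := by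
          rw [pow_succ', Matrix.mulVec_mulVec]
        have hs := hSrec (m + 1) (by omega)
        simp only [Nat.add_sub_cancel] at hs
        rw [hA]
        constructor
        · rw [(hmv _).1, ih.1, ih.2, hs, hτ, hδ, hX, hY]; ring
        · rw [(hmv _).2, ih.1, ih.2, hs, hτ, hδ, hX, hY]; ring
  -- T as a range sum
  have hTrange : ∀ n : ℕ, T n = ∑ i ∈ Finset.range n, S i := by
    intro n
    induction n with
    | zero => simpa using hT0
    | succ m ih => rw [hTsucc, Finset.sum_range_succ, ih]
  -- b1p
  obtain ⟨q, rfl⟩ : ∃ q, p = q + 1 := ⟨p - 1, by omega⟩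
  have hb1p : (∑ j ∈ Finset.range (q + 1), (A ^ j).mulVec b) 0
      = S (q + 1) * b 0 + β * T (q + 1) := by
    have hsum : (∑ j ∈ Finset.range (q + 1), (A ^ j).mulVec b) 0
        = ∑ j ∈ Finset.range (q + 1), ((A ^ j).mulVec b) 0 := by
      simp [Finset.sum_apply]
    rw [hsum, Finset.sum_range_succ']
    have : ∀ i ∈ Finset.range q, ((A ^ (i + 1)).mulVec b) 0
        = S (i + 1) * X - δ * S i * b 0 := fun i _ => (hpow i).1
    rw [Finset.sum_congr rfl this]
    simp only [pow_zero, Matrix.one_mulVec]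
    have h1 : ∑ i ∈ Finset.range q, (S (i + 1) * X - δ * S i * b 0)
        = X * (∑ i ∈ Finset.range q, S (i + 1)) - δ * b 0 * (∑ i ∈ Finset.range q, S i) := by
      rw [Finset.mul_sum, Finset.mul_sum, ← Finset.sum_sub_distrib]
      exact Finset.sum_congr rfl fun i _ => by ring
    rw [h1]
    have h2 : ∑ i ∈ Finset.range q, S (i + 1) = T (q + 1) := by
      rw [hTrange (q + 1), Finset.sum_range_succ']
      rw [hS0]; ring
    have h3 : ∑ i ∈ Finset.range q, S i = T q := (hTrange q).symm
    rw [h2, h3]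
    have hEq := hE q
    linear_combination b 0 * hEq + T (q + 1) * (hX - b 0 * hτ - hβdef)
  -- u 1 = - T p
  have hu1 : u 1 = - (S 1) * T (q + 1) := by
    have h := (hrec 1 le_rfl).1
    simp only [Nat.sub_self] at h
    rw [h, hu0, hw0, hb1p, hS1]
    field_simp
    ring
  -- two-step recurrence for u
  have hu2 : ∀ k : ℕ, u (k + 2) = τ * u (k + 1) - δ * u k + S (q + 1) := by
    intro k
    have h1 := (hrec (k + 1) (by omega)).1
    have h2 := (hrec (k + 2) (by omega)).1
    have h3 := (hrec (k + 2) (by omega)).2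
    simp only [Nat.add_sub_cancel, show k + 2 - 1 = k + 1 from rfl] at h1 h2 h3
    have hw2 := (hrec (k + 1) (by omega)).2
    simp only [Nat.add_sub_cancel] at hw2
    rw [h2, hw2]
    rw [hτ, hδ]
    have hwk : A 0 1 * w k = u (k + 1) - A 0 0 * u k - S (q + 1) / β * b 0 := by
      linear_combination -h1
    field_simp
    linear_combination (-(A 1 1 * S (q + 1) * b 0)) * (mul_inv_cancel₀ hβ)
      - S (q + 1) * hβdef + (β * A 1 1) * hwk
  -- main claim for all j
  have main : ∀ k : ℕ, u k = S (q + 1) * T k - S k * T (q + 1) ∧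
      u (k + 1) = S (q + 1) * T (k + 1) - S (k + 1) * T (q + 1) := by
    intro k
    induction k with
    | zero =>
        refine ⟨by rw [hu0, hT0, hS0]; ring, ?_⟩
        rw [hu1, hT1]; ring
    | succ m ih =>
        refine ⟨ih.2, ?_⟩
        have hrecu := hu2 m
        have hs := hSrec (m + 1) (by omega)
        simp only [Nat.add_sub_cancel] at hs
        have hEm := hE m
        have hTm2 : T (m + 2) = T (m + 1) + S (m + 1) := hTsucc (m + 1)
        rw [hrecu, ih.1, ih.2, hs, hTm2]
        linear_combination S (q + 1) * hEm
  exact ⟨fun j _ => (main j).1, by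
    rw [(main (q + 1)).1]; ring⟩
end
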